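/- arXiv:math/0612488 — 4 statements merged into one kernel-verified Lean document; each statement's English description precedes it below -/
import Mathlib

section
/- Suppose ε < 1/2 and log(ε_n − ε_{n−1}) = o(n) as n → ∞. Then sup over p ∈ [0,α] of P_p(τ < ∞, S_τ ≥ U_τ) is at most ε, and sup over p ∈ (α,1] of P_p(τ < ∞, S_τ ≤ L_τ) is at most ε. -/
open MeasureTheory ProbabilityTheory Filter Asymptotics
open scoped ENNReal

namespace SeqMC

variable {Ω : Type*} [MeasurableSpace Ω]

/-- Partial sums: `S n = X_1 + ⋯ + X_n`, where the i-th variable `X_i` is `X (i-1)`. -/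
def S (X : ℕ → Ω → ℕ) (n : ℕ) (ω : Ω) : ℕ := ∑ i ∈ Finset.range n, X i ω

/-- `X` is an i.i.d. Bernoulli(p) sequence under the probability measure `P`. -/
structure IsBernoulliSeq (P : Measure Ω) (p : ℝ) (X : ℕ → Ω → ℕ) : Prop where
  isProb : IsProbabilityMeasure P
  meas : ∀ i, Measurable (X i)
  bdd : ∀ i ω, X i ω ≤ 1
  indep : iIndepFun X P
  bern : ∀ i, P (X i ⁻¹' {1}) = ENNReal.ofReal p

/-- The walk stayed strictly between the boundaries at all steps `1 ≤ k ≤ n`, i.e. `τ > n`. -/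
def notStopped (X : ℕ → Ω → ℕ) (U L : ℕ → ℤ) (n : ℕ) (ω : Ω) : Prop :=
  ∀ k, 1 ≤ k → k ≤ n → L k < (S X k ω : ℤ) ∧ (S X k ω : ℤ) < U k

/-- The event `τ ≤ n` and `S_τ ≥ U_τ`. -/
def hitUpperBy (X : ℕ → Ω → ℕ) (U L : ℕ → ℤ) (n : ℕ) (ω : Ω) : Prop :=
  ∃ k, 1 ≤ k ∧ k ≤ n ∧ notStopped X U L (k - 1) ω ∧ U k ≤ (S X k ω : ℤ)

/-- The event `τ ≤ n` and `S_τ ≤ L_τ`. -/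
def hitLowerBy (X : ℕ → Ω → ℕ) (U L : ℕ → ℤ) (n : ℕ) (ω : Ω) : Prop :=
  ∃ k, 1 ≤ k ∧ k ≤ n ∧ notStopped X U L (k - 1) ω ∧ (S X k ω : ℤ) ≤ L k

/-- The recursively defined boundaries `(U_n, L_n)`: `U_1 = 2`, `L_1 = -1` and for `n ≥ 2`,
`U_n` is the least `j ∈ {1,2,…}` with `P_α(τ ≥ n, S_n ≥ j) + P_α(τ < n, S_τ ≥ U_τ) ≤ ε_n`,
`L_n` is the greatest `j ∈ ℤ` with `P_α(τ ≥ n, S_n ≤ j) + P_α(τ < n, S_τ ≤ L_τ) ≤ ε_n`.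
Here `Pα` is the measure `P_α` and `εs` the spending sequence. -/
noncomputable def bnd (Pα : Measure Ω) (X : ℕ → Ω → ℕ) (εs : ℕ → ℝ) : ℕ → ℤ × ℤ
  | 0 => (2, -1)
  | 1 => (2, -1)
  | n + 2 =>
      let U : ℕ → ℤ := fun k => if h : k < n + 2 then (bnd Pα X εs k).1 else 0
      let L : ℕ → ℤ := fun k => if h : k < n + 2 then (bnd Pα X εs k).2 else 0
      (sInf {j : ℤ | 1 ≤ j ∧
          Pα {ω | notStopped X U L (n + 1) ω ∧ j ≤ (S X (n + 2) ω : ℤ)} +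
            Pα {ω | hitUpperBy X U L (n + 1) ω} ≤ ENNReal.ofReal (εs (n + 2))},
       sSup {j : ℤ |
          Pα {ω | notStopped X U L (n + 1) ω ∧ (S X (n + 2) ω : ℤ) ≤ j} +
            Pα {ω | hitLowerBy X U L (n + 1) ω} ≤ ENNReal.ofReal (εs (n + 2))})
  termination_by n => n
  decreasing_by all_goals omega

/-- The upper boundary `U_n`. -/
noncomputable def Ub (Pα : Measure Ω) (X : ℕ → Ω → ℕ) (εs : ℕ → ℝ) (n : ℕ) : ℤ :=
  (bnd Pα X εs n).1

/-- The lower boundary `L_n`. -/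
noncomputable def Lb (Pα : Measure Ω) (X : ℕ → Ω → ℕ) (εs : ℕ → ℝ) (n : ℕ) : ℤ :=
  (bnd Pα X εs n).2

/-- The stopping time `τ = inf {k ≥ 1 : S_k ≥ U_k or S_k ≤ L_k}`, with `0` encoding `τ = ∞`. -/
noncomputable def tau (Pα : Measure Ω) (X : ℕ → Ω → ℕ) (εs : ℕ → ℝ) (ω : Ω) : ℕ :=
  sInf {k | 1 ≤ k ∧ ((S X k ω : ℤ) ≤ Lb Pα X εs k ∨ Ub Pα X εs k ≤ (S X k ω : ℤ))}

/-- `τ` as an extended nonneg real (`∞` when the algorithm never stops). -/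
noncomputable def tauE (Pα : Measure Ω) (X : ℕ → Ω → ℕ) (εs : ℕ → ℝ) (ω : Ω) : ℝ≥0∞ :=
  if tau Pα X εs ω = 0 then ⊤ else (tau Pα X εs ω : ℝ≥0∞)

/-- The event `τ < ∞` and `S_τ ≥ U_τ`. -/
def hitsUpper (Pα : Measure Ω) (X : ℕ → Ω → ℕ) (εs : ℕ → ℝ) (ω : Ω) : Prop :=
  tau Pα X εs ω ≠ 0 ∧ Ub Pα X εs (tau Pα X εs ω) ≤ (S X (tau Pα X εs ω) ω : ℤ)

/-- The event `τ < ∞` and `S_τ ≤ L_τ`. -/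
def hitsLower (Pα : Measure Ω) (X : ℕ → Ω → ℕ) (εs : ℕ → ℝ) (ω : Ω) : Prop :=
  tau Pα X εs ω ≠ 0 ∧ (S X (tau Pα X εs ω) ω : ℤ) ≤ Lb Pα X εs (tau Pα X εs ω)

/-- The estimator `p̂ = S_τ/τ` (`= α` if `τ = ∞`). -/
noncomputable def phat (Pα : Measure Ω) (X : ℕ → Ω → ℕ) (εs : ℕ → ℝ) (α : ℝ) (ω : Ω) : ℝ :=
  if tau Pα X εs ω = 0 then α
  else (S X (tau Pα X εs ω) ω : ℝ) / (tau Pα X εs ω)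

def bitVal (b : Bool) : ℕ := bif b then 1 else 0

def bS (b : ℕ → Bool) (k : ℕ) : ℕ := ∑ i ∈ Finset.range k, bitVal (b i)

lemma bS_mono {b c : ℕ → Bool} (h : ∀ i, b i ≤ c i) (k : ℕ) : bS b k ≤ bS c k := by
  refine Finset.sum_le_sum fun i _ => ?_
  have := h i; cases hb : b i <;> cases hc : c i <;> simp_all [bitVal] <;> exact absurd this (by decide)

lemma bS_congr {b c : ℕ → Bool} {n : ℕ} (h : ∀ i < n, b i = c i) {k : ℕ} (hk : k ≤ n) :
    bS b k = bS c k := by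
  refine Finset.sum_congr rfl fun i hi => ?_
  rw [h i (lt_of_lt_of_le (Finset.mem_range.mp hi) hk)]

lemma bS_le (b : ℕ → Bool) (k : ℕ) : bS b k ≤ k := by
  calc bS b k ≤ ∑ _i ∈ Finset.range k, 1 :=
        Finset.sum_le_sum fun i _ => by cases b i <;> simp [bitVal]
    _ = k := by simp

def predNS (U L : ℕ → ℤ) (n : ℕ) (b : ℕ → Bool) : Prop :=
  ∀ k, 1 ≤ k → k ≤ n → L k < (bS b k : ℤ) ∧ (bS b k : ℤ) < U k

def predHU (U L : ℕ → ℤ) (n : ℕ) (b : ℕ → Bool) : Prop :=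
  ∃ k, 1 ≤ k ∧ k ≤ n ∧ predNS U L (k - 1) b ∧ U k ≤ (bS b k : ℤ)

def predHL (U L : ℕ → ℤ) (n : ℕ) (b : ℕ → Bool) : Prop :=
  ∃ k, 1 ≤ k ∧ k ≤ n ∧ predNS U L (k - 1) b ∧ (bS b k : ℤ) ≤ L k

lemma predHU_congr {U L : ℕ → ℤ} {n : ℕ} {b c : ℕ → Bool} (h : ∀ i < n, b i = c i) :
    predHU U L n b ↔ predHU U L n c := by
  have key : ∀ k ≤ n, bS b k = bS c k := fun k hk => bS_congr h hk
  constructor <;> rintro ⟨k, hk1, hkn, hns, hU⟩ <;>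
    refine ⟨k, hk1, hkn, fun j hj1 hjk => ?_, ?_⟩
  · rw [← key j (by omega)]; exact hns j hj1 hjk
  · rw [← key k hkn]; exact hU
  · rw [key j (by omega)]; exact hns j hj1 hjk
  · rw [key k hkn]; exact hU

lemma predHL_congr {U L : ℕ → ℤ} {n : ℕ} {b c : ℕ → Bool} (h : ∀ i < n, b i = c i) :
    predHL U L n b ↔ predHL U L n c := by
  have key : ∀ k ≤ n, bS b k = bS c k := fun k hk => bS_congr h hk
  constructor <;> rintro ⟨k, hk1, hkn, hns, hU⟩ <;>
    refine ⟨k, hk1, hkn, fun j hj1 hjk => ?_, ?_⟩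
  · rw [← key j (by omega)]; exact hns j hj1 hjk
  · rw [← key k hkn]; exact hU
  · rw [key j (by omega)]; exact hns j hj1 hjk
  · rw [key k hkn]; exact hU

lemma predHU_mono {U L : ℕ → ℤ} {n : ℕ} {b c : ℕ → Bool} (hbc : ∀ i, b i ≤ c i)
    (h : predHU U L n b) : predHU U L n c := by
  classical
  obtain ⟨k, hk1, hkn, hns, hU⟩ := h
  have hex : ∃ j, 1 ≤ j ∧ j ≤ k ∧ U j ≤ (bS c j : ℤ) :=
    ⟨k, hk1, le_refl _, le_trans hU (by exact_mod_cast bS_mono hbc k)⟩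
  obtain ⟨h1, h2, h3⟩ := Nat.find_spec hex
  refine ⟨Nat.find hex, h1, le_trans h2 hkn, fun j hj1 hjk' => ?_, h3⟩
  have hjlt : j < Nat.find hex := by omega
  have hjk : j ≤ k - 1 := by omega
  have hb := hns j hj1 hjk
  have hmon : (bS b j : ℤ) ≤ (bS c j : ℤ) := by exact_mod_cast bS_mono hbc j
  refine ⟨lt_of_lt_of_le hb.1 hmon, ?_⟩
  by_contra hcon
  push_neg at hcon
  exact Nat.find_min hex hjlt ⟨hj1, by omega, hcon⟩

lemma predHL_anti {U L : ℕ → ℤ} {n : ℕ} {b c : ℕ → Bool} (hbc : ∀ i, c i ≤ b i)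
    (h : predHL U L n b) : predHL U L n c := by
  classical
  obtain ⟨k, hk1, hkn, hns, hL⟩ := h
  have hex : ∃ j, 1 ≤ j ∧ j ≤ k ∧ (bS c j : ℤ) ≤ L j :=
    ⟨k, hk1, le_refl _, le_trans (by exact_mod_cast bS_mono hbc k) hL⟩
  obtain ⟨h1, h2, h3⟩ := Nat.find_spec hex
  refine ⟨Nat.find hex, h1, le_trans h2 hkn, fun j hj1 hjk' => ?_, h3⟩
  have hjlt : j < Nat.find hex := by omega
  have hjk : j ≤ k - 1 := by omega
  have hb := hns j hj1 hjk
  have hmon : (bS c j : ℤ) ≤ (bS b j : ℤ) := by exact_mod_cast bS_mono hbc j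
  refine ⟨?_, lt_of_le_of_lt hmon hb.2⟩
  by_contra hcon
  push_neg at hcon
  exact Nat.find_min hex hjlt ⟨hj1, by omega, hcon⟩

def bfun (X : ℕ → Ω → ℕ) (ω : Ω) : ℕ → Bool := fun i => decide (X i ω = 1)

def extn (n : ℕ) (c : Fin n → Bool) : ℕ → Bool := fun i => if h : i < n then c ⟨i, h⟩ else false

noncomputable def θ (p : ℝ) (b : Bool) : ℝ≥0∞ := bif b then ENNReal.ofReal p else 1 - ENNReal.ofReal p


lemma bitVal_bfun {X : ℕ → Ω → ℕ} (hbdd : ∀ i ω, X i ω ≤ 1) (ω : Ω) (i : ℕ) :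
    bitVal (bfun X ω i) = X i ω := by
  have := hbdd i ω
  interval_cases h : X i ω <;> simp [bfun, bitVal, h]

lemma S_eq_bS {X : ℕ → Ω → ℕ} (hbdd : ∀ i ω, X i ω ≤ 1) (ω : Ω) (k : ℕ) :
    S X k ω = bS (bfun X ω) k :=
  Finset.sum_congr rfl fun i _ => (bitVal_bfun hbdd ω i).symm

lemma meas_singleton {P : Measure Ω} {p : ℝ} {X : ℕ → Ω → ℕ}
    (hP : IsBernoulliSeq P p X) (hp0 : 0 ≤ p) (hp1 : p ≤ 1) (i : ℕ) (b : Bool) :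
    P (X i ⁻¹' {bitVal b}) = θ p b := by
  haveI := hP.isProb
  cases b
  · have hset : X i ⁻¹' {bitVal false} = (X i ⁻¹' {1})ᶜ := by
      ext ω; have := hP.bdd i ω; simp [bitVal]; omega
    rw [hset, measure_compl ((hP.meas i) (measurableSet_singleton _)) (measure_ne_top _ _),
      hP.bern i, measure_univ]
    rfl
  · simpa [bitVal, θ] using hP.bern i

def cylX (X : ℕ → Ω → ℕ) (n : ℕ) (c : Fin n → Bool) : Set Ω :=
  {ω | ∀ i : Fin n, X i ω = bitVal (c i)}

lemma measurableSet_cylX {X : ℕ → Ω → ℕ} (hm : ∀ i, Measurable (X i)) (n : ℕ)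
    (c : Fin n → Bool) : MeasurableSet (cylX X n c) := by
  have : cylX X n c = ⋂ i : Fin n, X (i : ℕ) ⁻¹' {bitVal (c i)} := by
    ext ω; simp [cylX, Set.mem_iInter]
  rw [this]
  exact MeasurableSet.iInter fun i => (hm i) (measurableSet_singleton _)

lemma meas_cylX {P : Measure Ω} {p : ℝ} {X : ℕ → Ω → ℕ}
    (hP : IsBernoulliSeq P p X) (hp0 : 0 ≤ p) (hp1 : p ≤ 1) (n : ℕ) (c : Fin n → Bool) :
    P (cylX X n c) = ∏ i : Fin n, θ p (c i) := by
  classical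
  set sets : ℕ → Set ℕ := fun i => if h : i < n then {bitVal (c ⟨i, h⟩)} else Set.univ with hsets
  have hseteq : cylX X n c = ⋂ i ∈ Finset.range n, X i ⁻¹' sets i := by
    ext ω
    simp only [cylX, Set.mem_setOf_eq, Set.mem_iInter, Finset.mem_range]
    constructor
    · intro h i hi
      simp [hsets, hi, h ⟨i, hi⟩]
    · intro h i
      have := h i i.isLt
      simpa [hsets, i.isLt] using this
  have hind := (iIndepFun_iff_measure_inter_preimage_eq_mul.mp hP.indep) (Finset.range n)
    (sets := sets) (fun i _ => by
      by_cases h : i < n <;> simp [hsets, h])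
  rw [hseteq, hind]
  rw [← Fin.prod_univ_eq_prod_range (fun i => P (X i ⁻¹' sets i)) n]
  refine Finset.prod_congr rfl fun i _ => ?_
  have : sets (i : ℕ) = {bitVal (c i)} := by simp [hsets, i.isLt]
  rw [this, meas_singleton hP hp0 hp1]

lemma disjoint_cylX {X : ℕ → Ω → ℕ} (n : ℕ) {c c' : Fin n → Bool} (h : c ≠ c') :
    Disjoint (cylX X n c) (cylX X n c') := by
  rw [Set.disjoint_left]
  intro ω hc hc'
  apply h
  funext i
  have h1 := hc i
  have h2 := hc' i
  cases hb : c i <;> cases hb' : c' i <;> simp_all [bitVal]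

lemma event_eq_biUnion {X : ℕ → Ω → ℕ} (hbdd : ∀ i ω, X i ω ≤ 1) (n : ℕ)
    (Q : (ℕ → Bool) → Prop) (hdep : ∀ b c : ℕ → Bool, (∀ i < n, b i = c i) → Q b → Q c)
    (G : Finset (Fin n → Bool)) (hG : ∀ c, c ∈ G ↔ Q (extn n c)) :
    {ω | Q (bfun X ω)} = ⋃ c ∈ G, cylX X n c := by
  ext ω
  simp only [Set.mem_setOf_eq, Set.mem_iUnion, exists_prop]
  constructor
  · intro hQ
    refine ⟨fun i => bfun X ω i, ?_, fun i => (bitVal_bfun hbdd ω i).symm⟩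
    rw [hG]
    refine hdep _ _ (fun i hi => ?_) hQ
    simp [extn, hi]
  · rintro ⟨c, hcG, hcyl⟩
    refine hdep _ _ (fun i hi => ?_) ((hG c).mp hcG)
    have := hcyl ⟨i, hi⟩
    simp only [extn, hi, dif_pos]
    have hb := hbdd i ω
    cases hc : c ⟨i, hi⟩ <;> simp_all [bitVal, bfun]

lemma meas_event {P : Measure Ω} {p : ℝ} {X : ℕ → Ω → ℕ}
    (hP : IsBernoulliSeq P p X) (hp0 : 0 ≤ p) (hp1 : p ≤ 1) (n : ℕ)
    (Q : (ℕ → Bool) → Prop) (hdep : ∀ b c : ℕ → Bool, (∀ i < n, b i = c i) → Q b → Q c)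
    (G : Finset (Fin n → Bool)) (hG : ∀ c, c ∈ G ↔ Q (extn n c)) :
    P {ω | Q (bfun X ω)} = ∑ c ∈ G, ∏ i : Fin n, θ p (c i) := by
  rw [event_eq_biUnion hP.bdd n Q hdep G hG,
    measure_biUnion_finset (fun c hc c' hc' hne => (disjoint_cylX n hne))
      (fun c _ => measurableSet_cylX hP.meas n c)]
  exact Finset.sum_congr rfl fun c _ => meas_cylX hP hp0 hp1 n c
noncomputable def μu (n : ℕ) : Measure (Fin n → ℝ) :=
  Measure.pi (fun _ => volume.restrict (Set.Icc (0:ℝ) 1))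

lemma vol01_Iic {p : ℝ} (hp0 : 0 ≤ p) (hp1 : p ≤ 1) :
    (volume.restrict (Set.Icc (0:ℝ) 1)) (Set.Iic p) = ENNReal.ofReal p := by
  rw [Measure.restrict_apply measurableSet_Iic]
  have : Set.Iic p ∩ Set.Icc 0 1 = Set.Icc 0 p := by
    ext x
    simp only [Set.mem_inter_iff, Set.mem_Iic, Set.mem_Icc]
    constructor
    · rintro ⟨h1, h2, h3⟩; exact ⟨h2, h1⟩
    · rintro ⟨h1, h2⟩; exact ⟨h2, h1, le_trans h2 hp1⟩
  rw [this, Real.volume_Icc]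
  simp

lemma vol01_Ioi {p : ℝ} (hp0 : 0 ≤ p) (hp1 : p ≤ 1) :
    (volume.restrict (Set.Icc (0:ℝ) 1)) (Set.Ioi p) = 1 - ENNReal.ofReal p := by
  rw [Measure.restrict_apply measurableSet_Ioi]
  have : Set.Ioi p ∩ Set.Icc 0 1 = Set.Ioc p 1 := by
    ext x
    simp only [Set.mem_inter_iff, Set.mem_Ioi, Set.mem_Icc, Set.mem_Ioc]
    constructor
    · rintro ⟨h1, h2, h3⟩; exact ⟨h1, h3⟩
    · rintro ⟨h1, h2⟩; exact ⟨h1, le_trans hp0 (le_of_lt h1), h2⟩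
  rw [this, Real.volume_Ioc, ← ENNReal.ofReal_one, ← ENNReal.ofReal_sub _ hp0]

lemma vol01_theta {p : ℝ} (hp0 : 0 ≤ p) (hp1 : p ≤ 1) (b : Bool) :
    (volume.restrict (Set.Icc (0:ℝ) 1)) (if b = true then Set.Iic p else Set.Ioi p) = θ p b := by
  cases b
  · simpa [θ] using vol01_Ioi hp0 hp1
  · simpa [θ] using vol01_Iic hp0 hp1

def piset (n : ℕ) (p : ℝ) (c : Fin n → Bool) : Set (Fin n → ℝ) :=
  Set.univ.pi (fun i => if c i = true then Set.Iic p else Set.Ioi p)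

lemma meas_uniform {p : ℝ} (hp0 : 0 ≤ p) (hp1 : p ≤ 1) (n : ℕ)
    (G : Finset (Fin n → Bool)) :
    μu n {u | (fun i => decide (u i ≤ p)) ∈ G} = ∑ c ∈ G, ∏ i : Fin n, θ p (c i) := by
  have hset : {u : Fin n → ℝ | (fun i => decide (u i ≤ p)) ∈ G} = ⋃ c ∈ G, piset n p c := by
    ext u
    simp only [Set.mem_setOf_eq, Set.mem_iUnion, exists_prop]
    constructor
    · intro hu
      refine ⟨fun i => decide (u i ≤ p), hu, fun i _ => ?_⟩
      by_cases h : u i ≤ p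
      · simp [h]
      · simp [h]; exact not_le.mp h
    · rintro ⟨c, hcG, hc⟩
      have : (fun i => decide (u i ≤ p)) = c := by
        funext i
        have := hc i (Set.mem_univ i)
        cases hci : c i <;> simp [hci] at this ⊢ <;> exact this
      rwa [this]
  rw [hset, measure_biUnion_finset]
  · refine Finset.sum_congr rfl fun c _ => ?_
    rw [piset, μu, Measure.pi_pi]
    exact Finset.prod_congr rfl fun i _ => vol01_theta hp0 hp1 (c i)
  · intro c hc c' hc' hne
    rw [Function.onFun, Set.disjoint_left]
    intro u hu hu'
    apply hne
    funext i
    have h1 := hu i (Set.mem_univ i)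
    have h2 := hu' i (Set.mem_univ i)
    cases hci : c i <;> cases hci' : c' i <;> simp [hci, hci'] at h1 h2 <;> first
      | rfl
      | exact absurd h2 (not_le.mpr h1)
      | exact absurd h1 (not_le.mpr h2)
  · intro c _
    exact MeasurableSet.univ_pi fun i => by
      by_cases h : c i = true <;> simp [h, measurableSet_Iic, measurableSet_Ioi]

lemma prob_mono_upward {P P' : Measure Ω} {p q : ℝ} {X : ℕ → Ω → ℕ}
    (hP : IsBernoulliSeq P p X) (hP' : IsBernoulliSeq P' q X)
    (hp0 : 0 ≤ p) (hq1 : q ≤ 1) (hpq : p ≤ q) (n : ℕ)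
    (Q : (ℕ → Bool) → Prop) (hdep : ∀ b c : ℕ → Bool, (∀ i < n, b i = c i) → Q b → Q c)
    (hmono : ∀ b c : ℕ → Bool, (∀ i, b i ≤ c i) → Q b → Q c) :
    P {ω | Q (bfun X ω)} ≤ P' {ω | Q (bfun X ω)} := by
  classical
  have hp1 : p ≤ 1 := le_trans hpq hq1
  have hq0 : 0 ≤ q := le_trans hp0 hpq
  set G : Finset (Fin n → Bool) := Finset.univ.filter (fun c => Q (extn n c)) with hGdef
  have hG : ∀ c, c ∈ G ↔ Q (extn n c) := fun c => by simp [hGdef]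
  rw [meas_event hP hp0 hp1 n Q hdep G hG, meas_event hP' hq0 hq1 n Q hdep G hG,
    ← meas_uniform hp0 hp1 n G, ← meas_uniform hq0 hq1 n G]
  apply measure_mono
  intro u hu
  simp only [Set.mem_setOf_eq, hG] at hu ⊢
  refine hmono _ _ (fun i => ?_) hu
  simp only [extn]
  by_cases h : i < n
  · simp only [h, dif_pos]
    rw [Bool.le_iff_imp]
    intro hd
    simp only [decide_eq_true_eq] at hd ⊢
    exact le_trans hd hpq
  · simp [h]

lemma prob_anti_downward {P P' : Measure Ω} {p q : ℝ} {X : ℕ → Ω → ℕ}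
    (hP : IsBernoulliSeq P p X) (hP' : IsBernoulliSeq P' q X)
    (hp0 : 0 ≤ p) (hq1 : q ≤ 1) (hpq : p ≤ q) (n : ℕ)
    (Q : (ℕ → Bool) → Prop) (hdep : ∀ b c : ℕ → Bool, (∀ i < n, b i = c i) → Q b → Q c)
    (hanti : ∀ b c : ℕ → Bool, (∀ i, c i ≤ b i) → Q b → Q c) :
    P' {ω | Q (bfun X ω)} ≤ P {ω | Q (bfun X ω)} := by
  classical
  have hp1 : p ≤ 1 := le_trans hpq hq1
  have hq0 : 0 ≤ q := le_trans hp0 hpq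
  set G : Finset (Fin n → Bool) := Finset.univ.filter (fun c => Q (extn n c)) with hGdef
  have hG : ∀ c, c ∈ G ↔ Q (extn n c) := fun c => by simp [hGdef]
  rw [meas_event hP hp0 hp1 n Q hdep G hG, meas_event hP' hq0 hq1 n Q hdep G hG,
    ← meas_uniform hp0 hp1 n G, ← meas_uniform hq0 hq1 n G]
  apply measure_mono
  intro u hu
  simp only [Set.mem_setOf_eq, hG] at hu ⊢
  refine hanti _ _ (fun i => ?_) hu
  simp only [extn]
  by_cases h : i < n
  · simp only [h, dif_pos]
    rw [Bool.le_iff_imp]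
    intro hd
    simp only [decide_eq_true_eq] at hd ⊢
    exact le_trans hd hpq
  · simp [h]
section Aux
variable {Pα : Measure Ω} {X : ℕ → Ω → ℕ} {εs : ℕ → ℝ}

lemma notStopped_congr {X : ℕ → Ω → ℕ} {U U' L L' : ℕ → ℤ} {n : ℕ} {ω : Ω}
    (hU : ∀ k, 1 ≤ k → k ≤ n → U k = U' k) (hL : ∀ k, 1 ≤ k → k ≤ n → L k = L' k) :
    notStopped X U L n ω ↔ notStopped X U' L' n ω := by
  constructor <;> intro h k h1 h2
  · rw [← hU k h1 h2, ← hL k h1 h2]; exact h k h1 h2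
  · rw [hU k h1 h2, hL k h1 h2]; exact h k h1 h2

lemma hitUpperBy_congr {X : ℕ → Ω → ℕ} {U U' L L' : ℕ → ℤ} {n : ℕ} {ω : Ω}
    (hU : ∀ k, 1 ≤ k → k ≤ n → U k = U' k) (hL : ∀ k, 1 ≤ k → k ≤ n → L k = L' k) :
    hitUpperBy X U L n ω ↔ hitUpperBy X U' L' n ω := by
  constructor <;> rintro ⟨k, h1, h2, hns, hUk⟩
  · exact ⟨k, h1, h2,
      (notStopped_congr (fun j a b => hU j a (by omega)) (fun j a b => hL j a (by omega))).mp hns,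
      by rw [← hU k h1 h2]; exact hUk⟩
  · exact ⟨k, h1, h2,
      (notStopped_congr (fun j a b => hU j a (by omega)) (fun j a b => hL j a (by omega))).mpr hns,
      by rw [hU k h1 h2]; exact hUk⟩

lemma hitLowerBy_congr {X : ℕ → Ω → ℕ} {U U' L L' : ℕ → ℤ} {n : ℕ} {ω : Ω}
    (hU : ∀ k, 1 ≤ k → k ≤ n → U k = U' k) (hL : ∀ k, 1 ≤ k → k ≤ n → L k = L' k) :
    hitLowerBy X U L n ω ↔ hitLowerBy X U' L' n ω := by
  constructor <;> rintro ⟨k, h1, h2, hns, hLk⟩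
  · exact ⟨k, h1, h2,
      (notStopped_congr (fun j a b => hU j a (by omega)) (fun j a b => hL j a (by omega))).mp hns,
      by rw [← hL k h1 h2]; exact hLk⟩
  · exact ⟨k, h1, h2,
      (notStopped_congr (fun j a b => hU j a (by omega)) (fun j a b => hL j a (by omega))).mpr hns,
      by rw [hL k h1 h2]; exact hLk⟩

lemma Ub_one : Ub Pα X εs 1 = 2 := by rw [Ub, bnd]

lemma Lb_one : Lb Pα X εs 1 = -1 := by rw [Lb, bnd]

lemma Ub_succ_succ (n : ℕ) :
    Ub Pα X εs (n + 2) = sInf {j : ℤ | 1 ≤ j ∧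
      Pα {ω | notStopped X (Ub Pα X εs) (Lb Pα X εs) (n + 1) ω ∧ j ≤ (S X (n + 2) ω : ℤ)} +
        Pα {ω | hitUpperBy X (Ub Pα X εs) (Lb Pα X εs) (n + 1) ω} ≤
          ENNReal.ofReal (εs (n + 2))} := by
  have hU : ∀ k, 1 ≤ k → k ≤ n + 1 →
      (fun k => if _ : k < n + 2 then (bnd Pα X εs k).1 else 0) k = Ub Pα X εs k :=
    fun k _ h2 => by simp only [Ub, dif_pos (show k < n + 2 by omega)]
  have hL : ∀ k, 1 ≤ k → k ≤ n + 1 →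
      (fun k => if _ : k < n + 2 then (bnd Pα X εs k).2 else 0) k = Lb Pα X εs k :=
    fun k _ h2 => by simp only [Lb, dif_pos (show k < n + 2 by omega)]
  rw [Ub, bnd]
  refine congrArg sInf ?_
  ext j
  simp only [Set.mem_setOf_eq]
  have e2 : {ω | hitUpperBy X (fun k => if _ : k < n + 2 then (bnd Pα X εs k).1 else 0)
      (fun k => if _ : k < n + 2 then (bnd Pα X εs k).2 else 0) (n + 1) ω} =
      {ω | hitUpperBy X (Ub Pα X εs) (Lb Pα X εs) (n + 1) ω} :=
    Set.ext fun ω => hitUpperBy_congr hU hL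
  rw [Set.ext fun ω => and_congr_left' (notStopped_congr hU hL), e2]

lemma Lb_succ_succ (n : ℕ) :
    Lb Pα X εs (n + 2) = sSup {j : ℤ |
      Pα {ω | notStopped X (Ub Pα X εs) (Lb Pα X εs) (n + 1) ω ∧ (S X (n + 2) ω : ℤ) ≤ j} +
        Pα {ω | hitLowerBy X (Ub Pα X εs) (Lb Pα X εs) (n + 1) ω} ≤
          ENNReal.ofReal (εs (n + 2))} := by
  have hU : ∀ k, 1 ≤ k → k ≤ n + 1 →
      (fun k => if _ : k < n + 2 then (bnd Pα X εs k).1 else 0) k = Ub Pα X εs k :=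
    fun k _ h2 => by simp only [Ub, dif_pos (show k < n + 2 by omega)]
  have hL : ∀ k, 1 ≤ k → k ≤ n + 1 →
      (fun k => if _ : k < n + 2 then (bnd Pα X εs k).2 else 0) k = Lb Pα X εs k :=
    fun k _ h2 => by simp only [Lb, dif_pos (show k < n + 2 by omega)]
  rw [Lb, bnd]
  refine congrArg sSup ?_
  ext j
  simp only [Set.mem_setOf_eq]
  have e2 : {ω | hitLowerBy X (fun k => if _ : k < n + 2 then (bnd Pα X εs k).1 else 0)
      (fun k => if _ : k < n + 2 then (bnd Pα X εs k).2 else 0) (n + 1) ω} =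
      {ω | hitLowerBy X (Ub Pα X εs) (Lb Pα X εs) (n + 1) ω} :=
    Set.ext fun ω => hitLowerBy_congr hU hL
  rw [Set.ext fun ω => and_congr_left' (notStopped_congr hU hL), e2]

lemma S_le {X : ℕ → Ω → ℕ} (hbdd : ∀ i ω, X i ω ≤ 1) (k : ℕ) (ω : Ω) : S X k ω ≤ k := by
  calc S X k ω ≤ ∑ _i ∈ Finset.range k, 1 := Finset.sum_le_sum fun i _ => hbdd i ω
    _ = k := by simp

lemma cover_tri {X : ℕ → Ω → ℕ} (U L : ℕ → ℤ) (n : ℕ) (ω : Ω) :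
    notStopped X U L n ω ∨ hitUpperBy X U L n ω ∨ hitLowerBy X U L n ω := by
  classical
  by_cases h : notStopped X U L n ω
  · exact Or.inl h
  · unfold notStopped at h
    push_neg at h
    obtain ⟨k, hk1, hkn, hk⟩ := h
    have hex : ∃ j, 1 ≤ j ∧ j ≤ n ∧ ((S X j ω : ℤ) ≤ L j ∨ U j ≤ (S X j ω : ℤ)) := by
      refine ⟨k, hk1, hkn, ?_⟩
      by_cases h' : (S X k ω : ℤ) ≤ L k
      · exact Or.inl h'
      · exact Or.inr (hk (by omega))
    obtain ⟨h1, h2, h3⟩ := Nat.find_spec hex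
    have hns : notStopped X U L (Nat.find hex - 1) ω := by
      intro i hi1 hi2
      have hilt : i < Nat.find hex := by omega
      have hmin := Nat.find_min hex hilt
      constructor
      · by_contra hc
        exact hmin ⟨hi1, by omega, Or.inl (by omega)⟩
      · by_contra hc
        exact hmin ⟨hi1, by omega, Or.inr (by omega)⟩
    rcases h3 with h3 | h3
    · exact Or.inr (Or.inr ⟨Nat.find hex, h1, h2, hns, h3⟩)
    · exact Or.inr (Or.inl ⟨Nat.find hex, h1, h2, hns, h3⟩)

end Aux
section Main
variable {Pα : Measure Ω} {X : ℕ → Ω → ℕ} {εs : ℕ → ℝ}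

lemma main_bounds {α ε : ℝ} (εs : ℕ → ℝ) (hmono : Monotone εs) (hlt : ∀ n, εs n < ε)
    (hεnn : ∀ n, 0 ≤ εs n) (hεhalf : ε < 1 / 2)
    (Pα : Measure Ω) (X : ℕ → Ω → ℕ) (hB : IsBernoulliSeq Pα α X) :
    ∀ n : ℕ,
      Pα {ω | hitUpperBy X (Ub Pα X εs) (Lb Pα X εs) (n + 1) ω} ≤ ENNReal.ofReal (εs (n + 1)) ∧
      Pα {ω | hitLowerBy X (Ub Pα X εs) (Lb Pα X εs) (n + 1) ω} ≤ ENNReal.ofReal (εs (n + 1)) := by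
  haveI := hB.isProb
  have hSle : ∀ k (ω : Ω), (S X k ω : ℤ) ≤ k := fun k ω => by exact_mod_cast S_le hB.bdd k ω
  have hSnn : ∀ k (ω : Ω), (0 : ℤ) ≤ (S X k ω : ℤ) := fun k ω => Int.natCast_nonneg _
  intro n
  induction n with
  | zero =>
    constructor
    · have he : {ω | hitUpperBy X (Ub Pα X εs) (Lb Pα X εs) 1 ω} = ∅ := by
        ext ω
        simp only [Set.mem_setOf_eq, Set.mem_empty_iff_false, iff_false]
        rintro ⟨k, h1, h2, -, hUk⟩
        have hk : k = 1 := by omega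
        subst hk
        rw [Ub_one] at hUk
        have := hSle 1 ω
        omega
      rw [he, measure_empty]; exact zero_le
    · have he : {ω | hitLowerBy X (Ub Pα X εs) (Lb Pα X εs) 1 ω} = ∅ := by
        ext ω
        simp only [Set.mem_setOf_eq, Set.mem_empty_iff_false, iff_false]
        rintro ⟨k, h1, h2, -, hLk⟩
        have hk : k = 1 := by omega
        subst hk
        rw [Lb_one] at hLk
        have := hSnn 1 ω
        omega
      rw [he, measure_empty]; exact zero_le
  | succ m ih =>
    obtain ⟨ihU, ihL⟩ := ih
    constructor
    · -- upper bound at m + 2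
      have hempty : {ω | notStopped X (Ub Pα X εs) (Lb Pα X εs) (m + 1) ω ∧
          ((m : ℤ) + 3) ≤ (S X (m + 2) ω : ℤ)} = ∅ := by
        ext ω
        simp only [Set.mem_setOf_eq, Set.mem_empty_iff_false, iff_false, not_and]
        intro _
        have := hSle (m + 2) ω
        push_neg
        omega
      have hne : Set.Nonempty {j : ℤ | 1 ≤ j ∧
          Pα {ω | notStopped X (Ub Pα X εs) (Lb Pα X εs) (m + 1) ω ∧ j ≤ (S X (m + 2) ω : ℤ)} +
            Pα {ω | hitUpperBy X (Ub Pα X εs) (Lb Pα X εs) (m + 1) ω} ≤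
              ENNReal.ofReal (εs (m + 2))} := by
        refine ⟨(m : ℤ) + 3, by omega, ?_⟩
        rw [show (m + 2 : ℕ) = m + 1 + 1 from rfl] at *
        rw [hempty, measure_empty, zero_add]
        exact le_trans ihU (ENNReal.ofReal_le_ofReal (hmono (by omega)))
      have hbddA : BddBelow {j : ℤ | 1 ≤ j ∧
          Pα {ω | notStopped X (Ub Pα X εs) (Lb Pα X εs) (m + 1) ω ∧ j ≤ (S X (m + 2) ω : ℤ)} +
            Pα {ω | hitUpperBy X (Ub Pα X εs) (Lb Pα X εs) (m + 1) ω} ≤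
              ENNReal.ofReal (εs (m + 2))} := ⟨1, fun j hj => hj.1⟩
      have hmem := Int.csInf_mem hne hbddA
      rw [← Ub_succ_succ] at hmem
      obtain ⟨-, hmem2⟩ := hmem
      have hsub : {ω | hitUpperBy X (Ub Pα X εs) (Lb Pα X εs) (m + 2) ω} ⊆
          {ω | notStopped X (Ub Pα X εs) (Lb Pα X εs) (m + 1) ω ∧
            Ub Pα X εs (m + 2) ≤ (S X (m + 2) ω : ℤ)} ∪
          {ω | hitUpperBy X (Ub Pα X εs) (Lb Pα X εs) (m + 1) ω} := by
        rintro ω ⟨k, h1, h2, hns, hUk⟩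
        by_cases hk : k ≤ m + 1
        · exact Or.inr ⟨k, h1, hk, hns, hUk⟩
        · have hke : k = m + 2 := by omega
          subst hke
          exact Or.inl ⟨by simpa using hns, hUk⟩
      exact le_trans (le_trans (measure_mono hsub) (measure_union_le _ _)) hmem2
    · -- lower bound at m + 2
      have hempty : {ω | notStopped X (Ub Pα X εs) (Lb Pα X εs) (m + 1) ω ∧
          (S X (m + 2) ω : ℤ) ≤ -1} = ∅ := by
        ext ω
        simp only [Set.mem_setOf_eq, Set.mem_empty_iff_false, iff_false, not_and]
        intro _
        have := hSnn (m + 2) ω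
        push_neg
        omega
      have hne : Set.Nonempty {j : ℤ |
          Pα {ω | notStopped X (Ub Pα X εs) (Lb Pα X εs) (m + 1) ω ∧ (S X (m + 2) ω : ℤ) ≤ j} +
            Pα {ω | hitLowerBy X (Ub Pα X εs) (Lb Pα X εs) (m + 1) ω} ≤
              ENNReal.ofReal (εs (m + 2))} := by
        refine ⟨(-1 : ℤ), ?_⟩
        rw [Set.mem_setOf_eq, hempty, measure_empty, zero_add]
        exact le_trans ihL (ENNReal.ofReal_le_ofReal (hmono (by omega)))
      have hbddB : BddAbove {j : ℤ |
          Pα {ω | notStopped X (Ub Pα X εs) (Lb Pα X εs) (m + 1) ω ∧ (S X (m + 2) ω : ℤ) ≤ j} +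
            Pα {ω | hitLowerBy X (Ub Pα X εs) (Lb Pα X εs) (m + 1) ω} ≤
              ENNReal.ofReal (εs (m + 2))} := by
        refine ⟨(m : ℤ) + 1, fun j hj => ?_⟩
        rw [Set.mem_setOf_eq] at hj
        by_contra hc
        push_neg at hc
        have hev : {ω | notStopped X (Ub Pα X εs) (Lb Pα X εs) (m + 1) ω ∧
            (S X (m + 2) ω : ℤ) ≤ j} =
            {ω | notStopped X (Ub Pα X εs) (Lb Pα X εs) (m + 1) ω} := by
          ext ω
          simp only [Set.mem_setOf_eq, and_iff_left_iff_imp]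
          intro _
          have := hSle (m + 2) ω
          omega
        rw [hev] at hj
        have hcov : (Set.univ : Set Ω) ⊆
            {ω | notStopped X (Ub Pα X εs) (Lb Pα X εs) (m + 1) ω} ∪
            ({ω | hitLowerBy X (Ub Pα X εs) (Lb Pα X εs) (m + 1) ω} ∪
             {ω | hitUpperBy X (Ub Pα X εs) (Lb Pα X εs) (m + 1) ω}) := by
          intro ω _
          rcases cover_tri (Ub Pα X εs) (Lb Pα X εs) (m + 1) ω with h | h | h
          · exact Or.inl h
          · exact Or.inr (Or.inr h)
          · exact Or.inr (Or.inl h)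
        have h1 : (1 : ℝ≥0∞) ≤
            Pα {ω | notStopped X (Ub Pα X εs) (Lb Pα X εs) (m + 1) ω} +
              (Pα {ω | hitLowerBy X (Ub Pα X εs) (Lb Pα X εs) (m + 1) ω} +
               Pα {ω | hitUpperBy X (Ub Pα X εs) (Lb Pα X εs) (m + 1) ω}) := by
          calc (1 : ℝ≥0∞) = Pα Set.univ := measure_univ.symm
            _ ≤ _ := le_trans (measure_mono hcov)
                (le_trans (measure_union_le _ _)
                  (add_le_add le_rfl (measure_union_le _ _)))
        have h2 : (1 : ℝ≥0∞) ≤ ENNReal.ofReal (εs (m + 2)) + ENNReal.ofReal (εs (m + 1)) := by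
          refine le_trans h1 ?_
          calc Pα {ω | notStopped X (Ub Pα X εs) (Lb Pα X εs) (m + 1) ω} +
              (Pα {ω | hitLowerBy X (Ub Pα X εs) (Lb Pα X εs) (m + 1) ω} +
               Pα {ω | hitUpperBy X (Ub Pα X εs) (Lb Pα X εs) (m + 1) ω}) =
              (Pα {ω | notStopped X (Ub Pα X εs) (Lb Pα X εs) (m + 1) ω} +
               Pα {ω | hitLowerBy X (Ub Pα X εs) (Lb Pα X εs) (m + 1) ω}) +
              Pα {ω | hitUpperBy X (Ub Pα X εs) (Lb Pα X εs) (m + 1) ω} := by ring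
            _ ≤ _ := add_le_add hj ihU
        have h3 : ENNReal.ofReal (εs (m + 2)) + ENNReal.ofReal (εs (m + 1)) < 1 := by
          rw [← ENNReal.ofReal_add (hεnn _) (hεnn _)]
          refine ENNReal.ofReal_lt_one.mpr ?_
          have := hlt (m + 2)
          have := hlt (m + 1)
          linarith
        exact absurd (lt_of_le_of_lt h2 h3) (by simp)
      have hmem := Int.csSup_mem hne hbddB
      rw [← Lb_succ_succ] at hmem
      rw [Set.mem_setOf_eq] at hmem
      have hsub : {ω | hitLowerBy X (Ub Pα X εs) (Lb Pα X εs) (m + 2) ω} ⊆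
          {ω | notStopped X (Ub Pα X εs) (Lb Pα X εs) (m + 1) ω ∧
            (S X (m + 2) ω : ℤ) ≤ Lb Pα X εs (m + 2)} ∪
          {ω | hitLowerBy X (Ub Pα X εs) (Lb Pα X εs) (m + 1) ω} := by
        rintro ω ⟨k, h1, h2, hns, hLk⟩
        by_cases hk : k ≤ m + 1
        · exact Or.inr ⟨k, h1, hk, hns, hLk⟩
        · have hke : k = m + 2 := by omega
          subst hke
          exact Or.inl ⟨by simpa using hns, hLk⟩
      exact le_trans (le_trans (measure_mono hsub) (measure_union_le _ _)) hmem

lemma hitUpperBy_mono_n {X : ℕ → Ω → ℕ} (U L : ℕ → ℤ) :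
    Monotone (fun n => {ω : Ω | hitUpperBy X U L n ω}) := by
  intro a b hab ω hω
  obtain ⟨k, h1, h2, hns, hU⟩ := hω
  exact ⟨k, h1, le_trans h2 hab, hns, hU⟩

lemma hitLowerBy_mono_n {X : ℕ → Ω → ℕ} (U L : ℕ → ℤ) :
    Monotone (fun n => {ω : Ω | hitLowerBy X U L n ω}) := by
  intro a b hab ω hω
  obtain ⟨k, h1, h2, hns, hL⟩ := hω
  exact ⟨k, h1, le_trans h2 hab, hns, hL⟩

lemma hitsUpper_eq_iUnion (Pα : Measure Ω) (X : ℕ → Ω → ℕ) (εs : ℕ → ℝ) :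
    {ω | hitsUpper Pα X εs ω} =
      ⋃ n, {ω | hitUpperBy X (Ub Pα X εs) (Lb Pα X εs) n ω} := by
  ext ω
  simp only [Set.mem_setOf_eq, Set.mem_iUnion]
  constructor
  · rintro ⟨hτ0, hτU⟩
    have hne : {k | 1 ≤ k ∧ ((S X k ω : ℤ) ≤ Lb Pα X εs k ∨
        Ub Pα X εs k ≤ (S X k ω : ℤ))}.Nonempty := by
      by_contra hc
      rw [Set.not_nonempty_iff_eq_empty] at hc
      apply hτ0
      rw [tau, hc, Nat.sInf_empty]
    have hmem := Nat.sInf_mem hne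
    refine ⟨tau Pα X εs ω, tau Pα X εs ω, hmem.1, le_refl _, ?_, hτU⟩
    intro k hk1 hk2
    have hklt : k < tau Pα X εs ω := by
      have h1 := hmem.1
      omega
    have hnotmem := Nat.notMem_of_lt_sInf (show k < sInf _ from hklt)
    rw [Set.mem_setOf_eq] at hnotmem
    constructor
    · by_contra hc
      exact hnotmem ⟨hk1, Or.inl (by omega)⟩
    · by_contra hc
      exact hnotmem ⟨hk1, Or.inr (by omega)⟩
  · rintro ⟨n, k, hk1, hkn, hns, hUk⟩
    have hkmem : k ∈ {k | 1 ≤ k ∧ ((S X k ω : ℤ) ≤ Lb Pα X εs k ∨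
        Ub Pα X εs k ≤ (S X k ω : ℤ))} := ⟨hk1, Or.inr hUk⟩
    have hne : {k | 1 ≤ k ∧ ((S X k ω : ℤ) ≤ Lb Pα X εs k ∨
        Ub Pα X εs k ≤ (S X k ω : ℤ))}.Nonempty := ⟨k, hkmem⟩
    have htau : tau Pα X εs ω = sInf {k | 1 ≤ k ∧ ((S X k ω : ℤ) ≤ Lb Pα X εs k ∨
        Ub Pα X εs k ≤ (S X k ω : ℤ))} := by rw [tau]
    have hmem := Nat.sInf_mem hne
    rw [← htau] at hmem
    have hle : tau Pα X εs ω ≤ k := htau ▸ Nat.sInf_le hkmem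
    have heq : tau Pα X εs ω = k := by
      by_contra hc
      have hlt : tau Pα X εs ω < k := by omega
      have h1 := hmem.1
      have h2 := hns (tau Pα X εs ω) h1 (by omega)
      rcases hmem.2 with h | h
      · omega
      · omega
    exact ⟨by omega, by rw [heq]; exact hUk⟩

lemma hitsLower_eq_iUnion (Pα : Measure Ω) (X : ℕ → Ω → ℕ) (εs : ℕ → ℝ) :
    {ω | hitsLower Pα X εs ω} =
      ⋃ n, {ω | hitLowerBy X (Ub Pα X εs) (Lb Pα X εs) n ω} := by
  ext ω
  simp only [Set.mem_setOf_eq, Set.mem_iUnion]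
  constructor
  · rintro ⟨hτ0, hτL⟩
    have hne : {k | 1 ≤ k ∧ ((S X k ω : ℤ) ≤ Lb Pα X εs k ∨
        Ub Pα X εs k ≤ (S X k ω : ℤ))}.Nonempty := by
      by_contra hc
      rw [Set.not_nonempty_iff_eq_empty] at hc
      apply hτ0
      rw [tau, hc, Nat.sInf_empty]
    have hmem := Nat.sInf_mem hne
    refine ⟨tau Pα X εs ω, tau Pα X εs ω, hmem.1, le_refl _, ?_, hτL⟩
    intro k hk1 hk2
    have hklt : k < tau Pα X εs ω := by
      have h1 := hmem.1
      omega
    have hnotmem := Nat.notMem_of_lt_sInf (show k < sInf _ from hklt)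
    rw [Set.mem_setOf_eq] at hnotmem
    constructor
    · by_contra hc
      exact hnotmem ⟨hk1, Or.inl (by omega)⟩
    · by_contra hc
      exact hnotmem ⟨hk1, Or.inr (by omega)⟩
  · rintro ⟨n, k, hk1, hkn, hns, hLk⟩
    have hkmem : k ∈ {k | 1 ≤ k ∧ ((S X k ω : ℤ) ≤ Lb Pα X εs k ∨
        Ub Pα X εs k ≤ (S X k ω : ℤ))} := ⟨hk1, Or.inl hLk⟩
    have hne : {k | 1 ≤ k ∧ ((S X k ω : ℤ) ≤ Lb Pα X εs k ∨
        Ub Pα X εs k ≤ (S X k ω : ℤ))}.Nonempty := ⟨k, hkmem⟩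
    have htau : tau Pα X εs ω = sInf {k | 1 ≤ k ∧ ((S X k ω : ℤ) ≤ Lb Pα X εs k ∨
        Ub Pα X εs k ≤ (S X k ω : ℤ))} := by rw [tau]
    have hmem := Nat.sInf_mem hne
    rw [← htau] at hmem
    have hle : tau Pα X εs ω ≤ k := htau ▸ Nat.sInf_le hkmem
    have heq : tau Pα X εs ω = k := by
      by_contra hc
      have hlt : tau Pα X εs ω < k := by omega
      have h1 := hmem.1
      have h2 := hns (tau Pα X εs ω) h1 (by omega)
      rcases hmem.2 with h | h
      · omega
      · omega
    exact ⟨by omega, by rw [heq]; exact hLk⟩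

lemma hitUpperBy_iff_predHU {X : ℕ → Ω → ℕ} (hbdd : ∀ i ω, X i ω ≤ 1) (U L : ℕ → ℤ)
    (n : ℕ) (ω : Ω) : hitUpperBy X U L n ω ↔ predHU U L n (bfun X ω) := by
  unfold hitUpperBy predHU notStopped predNS
  simp only [S_eq_bS hbdd]

lemma hitLowerBy_iff_predHL {X : ℕ → Ω → ℕ} (hbdd : ∀ i ω, X i ω ≤ 1) (U L : ℕ → ℤ)
    (n : ℕ) (ω : Ω) : hitLowerBy X U L n ω ↔ predHL U L n (bfun X ω) := by
  unfold hitLowerBy predHL notStopped predNS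
  simp only [S_eq_bS hbdd]

end Main

theorem statement_2 {Ω : Type*} [MeasurableSpace Ω]
    (α ε : ℝ) (hα : α ∈ Set.Ioo (0:ℝ) 1) (hε : ε ∈ Set.Ioo (0:ℝ) 1)
    (εs : ℕ → ℝ) (hεs0 : εs 0 = 0) (hmono : Monotone εs)
    (hnonneg : ∀ n, 0 ≤ εs n) (hlt : ∀ n, εs n < ε)
    (hlim : Filter.Tendsto εs Filter.atTop (nhds ε))
    (P : ℝ → Measure Ω) (X : ℕ → Ω → ℕ)
    (hBern : ∀ p ∈ Set.Icc (0:ℝ) 1, IsBernoulliSeq (P p) p X)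
    (hεhalf : ε < 1 / 2)
    (hlog : (fun n => Real.log (εs n - εs (n - 1))) =o[atTop] fun n => (n : ℝ)) :
    (⨆ p ∈ Set.Icc (0:ℝ) α, P p {ω | hitsUpper (P α) X εs ω}) ≤ ENNReal.ofReal ε ∧
      (⨆ p ∈ Set.Ioc α 1, P p {ω | hitsLower (P α) X εs ω}) ≤ ENNReal.ofReal ε := by
  obtain ⟨hα0, hα1⟩ := hα
  have hα01 : α ∈ Set.Icc (0:ℝ) 1 := ⟨hα0.le, hα1.le⟩
  have hBα := hBern α hα01
  have hbddX := hBα.bdd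
  have main := main_bounds (α := α) (ε := ε) εs hmono hlt hnonneg hεhalf (P α) X hBα
  constructor
  · refine iSup₂_le fun p hp => ?_
    have hp01 : p ∈ Set.Icc (0:ℝ) 1 := ⟨hp.1, le_trans hp.2 hα1.le⟩
    have hBp := hBern p hp01
    haveI := hBp.isProb
    rw [hitsUpper_eq_iUnion,
      Directed.measure_iUnion ((hitUpperBy_mono_n (Ub (P α) X εs) (Lb (P α) X εs)).directed_le)]
    refine iSup_le fun n => ?_
    match n with
    | 0 =>
      have he : {ω | hitUpperBy X (Ub (P α) X εs) (Lb (P α) X εs) 0 ω} = ∅ := by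
        ext ω
        simp only [Set.mem_setOf_eq, Set.mem_empty_iff_false, iff_false]
        rintro ⟨k, h1, h2, -, -⟩
        omega
      rw [he, measure_empty]
      exact zero_le
    | (m + 1) =>
      have e1 : {ω | hitUpperBy X (Ub (P α) X εs) (Lb (P α) X εs) (m + 1) ω} =
          {ω | predHU (Ub (P α) X εs) (Lb (P α) X εs) (m + 1) (bfun X ω)} :=
        Set.ext fun ω => hitUpperBy_iff_predHU hbddX _ _ _ _
      calc P p {ω | hitUpperBy X (Ub (P α) X εs) (Lb (P α) X εs) (m + 1) ω}
          ≤ P α {ω | hitUpperBy X (Ub (P α) X εs) (Lb (P α) X εs) (m + 1) ω} := by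
            rw [e1]
            exact prob_mono_upward hBp hBα hp01.1 hα1.le hp.2 (m + 1)
              (predHU (Ub (P α) X εs) (Lb (P α) X εs) (m + 1))
              (fun b c h hb => (predHU_congr h).mp hb)
              (fun b c h hb => predHU_mono h hb)
        _ ≤ ENNReal.ofReal (εs (m + 1)) := (main m).1
        _ ≤ ENNReal.ofReal ε := ENNReal.ofReal_le_ofReal (hlt (m + 1)).le
  · refine iSup₂_le fun p hp => ?_
    have hp01 : p ∈ Set.Icc (0:ℝ) 1 := ⟨le_trans hα0.le hp.1.le, hp.2⟩
    have hBp := hBern p hp01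
    haveI := hBp.isProb
    rw [hitsLower_eq_iUnion,
      Directed.measure_iUnion ((hitLowerBy_mono_n (Ub (P α) X εs) (Lb (P α) X εs)).directed_le)]
    refine iSup_le fun n => ?_
    match n with
    | 0 =>
      have he : {ω | hitLowerBy X (Ub (P α) X εs) (Lb (P α) X εs) 0 ω} = ∅ := by
        ext ω
        simp only [Set.mem_setOf_eq, Set.mem_empty_iff_false, iff_false]
        rintro ⟨k, h1, h2, -, -⟩
        omega
      rw [he, measure_empty]
      exact zero_le
    | (m + 1) =>
      have e1 : {ω | hitLowerBy X (Ub (P α) X εs) (Lb (P α) X εs) (m + 1) ω} =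
          {ω | predHL (Ub (P α) X εs) (Lb (P α) X εs) (m + 1) (bfun X ω)} :=
        Set.ext fun ω => hitLowerBy_iff_predHL hbddX _ _ _ _
      calc P p {ω | hitLowerBy X (Ub (P α) X εs) (Lb (P α) X εs) (m + 1) ω}
          ≤ P α {ω | hitLowerBy X (Ub (P α) X εs) (Lb (P α) X εs) (m + 1) ω} := by
            rw [e1]
            exact prob_anti_downward hBα hBp hα0.le hp01.2 hp.1.le (m + 1)
              (predHL (Ub (P α) X εs) (Lb (P α) X εs) (m + 1))
              (fun b c h hb => (predHL_congr h).mp hb)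
              (fun b c h hb => predHL_anti h hb)
        _ ≤ ENNReal.ofReal (εs (m + 1)) := (main m).2
        _ ≤ ENNReal.ofReal ε := ENNReal.ofReal_le_ofReal (hlt (m + 1)).le

end SeqMC
end

section
/- For all 0 ≤ p ≤ q ≤ 1, the probability of ever hitting the upper boundary is monotone in the success probability: P_p(τ < ∞, S_τ ≥ U_τ) ≤ P_q(τ < ∞, S_τ ≥ U_τ). -/
open MeasureTheory ProbabilityTheory Filter Asymptotics
open scoped ENNReal

namespace SeqMC

variable {Ω : Type*} [MeasurableSpace Ω]

/-! ### Auxiliary development for `statement_4` -/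

section Statement4Aux

/-- The set of times at which the walk (with counting function `s`) has stopped. -/
def stopSet (U L : ℕ → ℤ) (s : ℕ → ℕ) : Set ℕ :=
  {k | 1 ≤ k ∧ ((s k : ℤ) ≤ L k ∨ U k ≤ (s k : ℤ))}

/-- The walk hits the upper boundary (first) by time `n`. -/
def hitPred (U L : ℕ → ℤ) (s : ℕ → ℕ) (n : ℕ) : Prop :=
  ∃ k, 1 ≤ k ∧ k ≤ n ∧ (∀ j, 1 ≤ j → j < k → j ∉ stopSet U L s) ∧ U k ≤ (s k : ℤ)

lemma hitPred_mono_n {U L : ℕ → ℤ} {s : ℕ → ℕ} : Monotone (hitPred U L s) := by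
  intro n m hnm ⟨k, h1, h2, h3, h4⟩
  exact ⟨k, h1, h2.trans hnm, h3, h4⟩

lemma hitPred_iff {U L : ℕ → ℤ} {s : ℕ → ℕ} :
    (sInf (stopSet U L s) ≠ 0 ∧ U (sInf (stopSet U L s)) ≤ (s (sInf (stopSet U L s)) : ℤ))
      ↔ ∃ n, hitPred U L s n := by
  constructor
  · rintro ⟨h0, hU⟩
    have hne : (stopSet U L s).Nonempty := by
      by_contra h
      rw [Set.not_nonempty_iff_eq_empty] at h
      rw [h, Nat.sInf_empty] at h0
      exact h0 rfl
    have hmem := Nat.sInf_mem hne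
    exact ⟨_, ⟨sInf (stopSet U L s), hmem.1, le_rfl,
      fun j _ hj => Nat.notMem_of_lt_sInf hj, hU⟩⟩
  · rintro ⟨n, k, h1, _, h3, h4⟩
    have hk : k ∈ stopSet U L s := ⟨h1, Or.inr h4⟩
    have hle : sInf (stopSet U L s) ≤ k := Nat.sInf_le hk
    have hmem := Nat.sInf_mem ⟨k, hk⟩
    have heq : sInf (stopSet U L s) = k := by
      rcases lt_or_eq_of_le hle with hlt | h
      · exact absurd hmem (h3 _ hmem.1 hlt)
      · exact h
    rw [heq]
    exact ⟨Nat.one_le_iff_ne_zero.mp h1, h4⟩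

lemma hitPred_mono_s {U L : ℕ → ℤ} {s s' : ℕ → ℕ} (hss : ∀ k, s k ≤ s' k) {n : ℕ}
    (h : hitPred U L s n) : hitPred U L s' n := by
  obtain ⟨k, h1, h2, h3, h4⟩ := h
  have hk' : k ∈ stopSet U L s' := ⟨h1, Or.inr (h4.trans (by exact_mod_cast hss k))⟩
  set k' := sInf (stopSet U L s') with hk'def
  have hmem := Nat.sInf_mem ⟨k, hk'⟩
  have hle : k' ≤ k := Nat.sInf_le hk'
  refine ⟨k', hmem.1, hle.trans h2, fun j hj1 hj2 => Nat.notMem_of_lt_sInf hj2, ?_⟩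
  rcases hmem.2 with hL | hU
  · rcases lt_or_eq_of_le hle with hlt | h
    · exfalso
      have hns : k' ∉ stopSet U L s := h3 _ hmem.1 hlt
      have : ¬ ((s k' : ℤ) ≤ L k' ∨ U k' ≤ (s k' : ℤ)) := fun hc => hns ⟨hmem.1, hc⟩
      push_neg at this
      have hgt := this.1
      have hs2 : (s k' : ℤ) ≤ (s' k' : ℤ) := by exact_mod_cast hss k'
      have hL' : (s' k' : ℤ) ≤ L k' := hL
      omega
    · rw [h]
      calc (U k : ℤ) ≤ (s k : ℤ) := h4
        _ ≤ (s' k : ℤ) := by exact_mod_cast hss k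
  · exact hU

lemma hitPred_congr {U L : ℕ → ℤ} {s s' : ℕ → ℕ} {n : ℕ} (hss : ∀ k, k ≤ n → s k = s' k)
    (h : hitPred U L s n) : hitPred U L s' n := by
  obtain ⟨k, h1, h2, h3, h4⟩ := h
  refine ⟨k, h1, h2, fun j hj1 hj2 hmem => h3 j hj1 hj2 ?_, ?_⟩
  · rcases hmem with ⟨ha, hb⟩
    rw [← hss j (by omega : j ≤ n)] at hb
    exact ⟨ha, hb⟩
  · rw [← hss k h2]
    exact h4

/-- The equivalence between `Bool × (Fin n → Bool)` and `Fin (n+1) → Bool` given by `Fin.cons`. -/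
def consBoolEquiv (n : ℕ) : Bool × (Fin n → Bool) ≃ (Fin (n + 1) → Bool) where
  toFun p := Fin.cons p.1 p.2
  invFun f := (f 0, fun i => f i.succ)
  left_inv p := by simp
  right_inv f := Fin.cons_self_tail f

lemma consBoolEquiv_apply (n : ℕ) (p : Bool × (Fin n → Bool)) :
    consBoolEquiv n p = Fin.cons p.1 p.2 := rfl

lemma cons_le_cons {n : ℕ} {x y : Bool} {b b' : Fin n → Bool} (hxy : x ≤ y) (h : b ≤ b') :
    (Fin.cons x b : Fin (n + 1) → Bool) ≤ Fin.cons y b' := by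
  intro i
  refine Fin.cases ?_ ?_ i
  · simpa using hxy
  · intro j; simpa using h j

/-- Monotonicity in the success probability of expectations of monotone functions
on the Bernoulli cube. -/
lemma sum_w_mono {p q : ℝ} (hp : 0 ≤ p) (hpq : p ≤ q) (hq : q ≤ 1) :
    ∀ (n : ℕ) (χ : (Fin n → Bool) → ℝ), (∀ b, 0 ≤ χ b) → Monotone χ →
    ∑ b : Fin n → Bool, χ b * ∏ i, (if b i then p else 1 - p)
      ≤ ∑ b : Fin n → Bool, χ b * ∏ i, (if b i then q else 1 - q) := by
  intro n
  induction n with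
  | zero => intro χ _ _; simp
  | succ n ih =>
    intro χ hχ0 hχm
    have hre : ∀ r : ℝ, ∑ b : Fin (n + 1) → Bool, χ b * ∏ i, (if b i then r else 1 - r)
        = r * (∑ b : Fin n → Bool, χ (Fin.cons true b) * ∏ i, (if b i then r else 1 - r))
          + (1 - r) *
            (∑ b : Fin n → Bool, χ (Fin.cons false b) * ∏ i, (if b i then r else 1 - r)) := by
      intro r
      rw [← Equiv.sum_comp (consBoolEquiv n)
        (fun b : Fin (n + 1) → Bool => χ b * ∏ i, (if b i then r else 1 - r))]
      rw [Fintype.sum_prod_type]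
      rw [Fintype.sum_bool]
      simp only [consBoolEquiv_apply, Fin.prod_univ_succ, Fin.cons_zero,
        Fin.cons_succ, Bool.false_eq_true, if_true, if_false, Finset.mul_sum]
      congr 1 <;> · refine Finset.sum_congr rfl fun b _ => by ring
    rw [hre p, hre q]
    have h1p := ih (fun b => χ (Fin.cons true b)) (fun b => hχ0 _)
      (fun b b' h => hχm (cons_le_cons le_rfl h))
    have h0p := ih (fun b => χ (Fin.cons false b)) (fun b => hχ0 _)
      (fun b b' h => hχm (cons_le_cons le_rfl h))
    have h01 : (∑ b : Fin n → Bool, χ (Fin.cons false b) * ∏ i, (if b i then q else 1 - q))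
        ≤ ∑ b : Fin n → Bool, χ (Fin.cons true b) * ∏ i, (if b i then q else 1 - q) := by
      refine Finset.sum_le_sum fun b _ => ?_
      have hw : (0:ℝ) ≤ ∏ i, (if b i then q else 1 - q) := by
        refine Finset.prod_nonneg fun i _ => ?_
        split <;> linarith
      exact mul_le_mul_of_nonneg_right
        (hχm (cons_le_cons (by simp) (le_refl b))) hw
    set A1p := ∑ b : Fin n → Bool, χ (Fin.cons true b) * ∏ i, (if b i then p else 1 - p)
    set A0p := ∑ b : Fin n → Bool, χ (Fin.cons false b) * ∏ i, (if b i then p else 1 - p)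
    set A1q := ∑ b : Fin n → Bool, χ (Fin.cons true b) * ∏ i, (if b i then q else 1 - q)
    set A0q := ∑ b : Fin n → Bool, χ (Fin.cons false b) * ∏ i, (if b i then q else 1 - q)
    have e1 : A1p ≤ A1q := h1p
    have e0 : A0p ≤ A0q := h0p
    nlinarith [mul_nonneg (sub_nonneg.2 hpq) (sub_nonneg.2 h01)]

/-- The value of the `i`-th coordinate encoded by a boolean vector of length `n`. -/
def vb (n : ℕ) (b : Fin n → Bool) (i : ℕ) : ℕ :=
  if h : i < n then (if b ⟨i, h⟩ then 1 else 0) else 0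

/-- Partial sums of the values encoded by a boolean vector. -/
def Tb (n : ℕ) (b : Fin n → Bool) (k : ℕ) : ℕ := ∑ i ∈ Finset.range k, vb n b i

/-- The cylinder event on which `X i = vb n b i` for all `i < n`. -/
def Eb (X : ℕ → Ω → ℕ) (n : ℕ) (b : Fin n → Bool) : Set Ω :=
  ⋂ i ∈ Finset.range n, X i ⁻¹' {vb n b i}

lemma mem_Eb {X : ℕ → Ω → ℕ} {n : ℕ} {b : Fin n → Bool} {ω : Ω} :
    ω ∈ Eb X n b ↔ ∀ i < n, X i ω = vb n b i := by
  simp [Eb]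

lemma Eb_measurable {X : ℕ → Ω → ℕ} (hm : ∀ i, Measurable (X i)) {n : ℕ} {b : Fin n → Bool} :
    MeasurableSet (Eb X n b) :=
  Finset.measurableSet_biInter _ fun i _ => hm i (measurableSet_singleton _)

lemma Eb_disjoint {X : ℕ → Ω → ℕ} {n : ℕ} {b b' : Fin n → Bool} (h : b ≠ b') :
    Disjoint (Eb X n b) (Eb X n b') := by
  rw [Set.disjoint_left]
  intro ω hb hb'
  apply h
  funext i
  have h1 := (mem_Eb.mp hb) i i.isLt
  have h2 := (mem_Eb.mp hb') i i.isLt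
  have h3 : vb n b i = vb n b' i := h1 ▸ h2
  have h4 : (if b i then 1 else 0 : ℕ) = if b' i then 1 else 0 := by
    simpa [vb, i.isLt] using h3
  cases hbi : b i <;> cases hbi' : b' i <;> simp_all

lemma mem_Eb_bvec {X : ℕ → Ω → ℕ} (hbdd : ∀ i ω, X i ω ≤ 1) {n : ℕ} (ω : Ω) :
    ω ∈ Eb X n (fun i => X i ω == 1) := by
  rw [mem_Eb]
  intro i hi
  have := hbdd i ω
  simp only [vb, hi, dif_pos]
  have h01 : X i ω = 0 ∨ X i ω = 1 := by omega
  rcases h01 with h0 | h0 <;> simp [h0]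

lemma meas_pre_zero {P : Measure Ω} {r : ℝ} {X : ℕ → Ω → ℕ}
    (hB : IsBernoulliSeq P r X) (hr0 : 0 ≤ r) (i : ℕ) :
    P (X i ⁻¹' {0}) = ENNReal.ofReal (1 - r) := by
  haveI := hB.isProb
  have h : X i ⁻¹' {0} = (X i ⁻¹' {1})ᶜ := by
    ext ω
    have := hB.bdd i ω
    simp only [Set.mem_preimage, Set.mem_singleton_iff, Set.mem_compl_iff]
    omega
  rw [h, measure_compl ((hB.meas i) (measurableSet_singleton 1)) (measure_ne_top _ _),
    hB.bern i, measure_univ, ENNReal.ofReal_sub 1 hr0, ENNReal.ofReal_one]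

lemma meas_Eb {P : Measure Ω} {r : ℝ} {X : ℕ → Ω → ℕ}
    (hB : IsBernoulliSeq P r X) (hr0 : 0 ≤ r) (n : ℕ) (b : Fin n → Bool) :
    P (Eb X n b) = ∏ i : Fin n, ENNReal.ofReal (if b i then r else 1 - r) := by
  rw [Eb, hB.indep.measure_inter_preimage_eq_mul (Finset.range n)
    (fun i _ => measurableSet_singleton _)]
  have h1 : ∀ i ∈ Finset.range n,
      P (X i ⁻¹' {vb n b i}) = ENNReal.ofReal (if vb n b i = 1 then r else 1 - r) := by
    intro i hi
    rw [Finset.mem_range] at hi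
    by_cases hb : vb n b i = 1
    · rw [hb, hB.bern i, if_pos rfl]
    · have h0 : vb n b i = 0 := by
        have h01 : vb n b i = 1 ∨ vb n b i = 0 := by
          simp only [vb, hi, dif_pos]
          cases b ⟨i, hi⟩ <;> simp
        rcases h01 with h | h
        · exact absurd h hb
        · exact h
      rw [h0, meas_pre_zero hB hr0 i, if_neg (by omega)]
  rw [Finset.prod_congr rfl h1,
    ← Fin.prod_univ_eq_prod_range (fun i => ENNReal.ofReal (if vb n b i = 1 then r else 1 - r)) n]
  refine Finset.prod_congr rfl fun i _ => ?_
  congr 1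
  simp only [vb, i.isLt, dif_pos, Fin.eta]
  cases b i <;> simp

/-- The central monotonicity estimate: the probability that the walk hits the upper boundary
first by time `n` is monotone in the success probability. -/
lemma meas_hitPred_le {P Q : Measure Ω} {X : ℕ → Ω → ℕ} {p q : ℝ}
    (hBp : IsBernoulliSeq P p X) (hBq : IsBernoulliSeq Q q X)
    (hp : 0 ≤ p) (hpq : p ≤ q) (hq : q ≤ 1) (U L : ℕ → ℤ) (n : ℕ) :
    P {ω | hitPred U L (fun k => S X k ω) n} ≤ Q {ω | hitPred U L (fun k => S X k ω) n} := by
  classical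
  set χ : (Fin n → Bool) → ℝ := fun b => if hitPred U L (Tb n b) n then 1 else 0 with hχ
  set D : Finset (Fin n → Bool) := Finset.univ.filter (fun b => hitPred U L (Tb n b) n) with hD
  have hSk : ∀ (b : Fin n → Bool) (ω : Ω), ω ∈ Eb X n b → ∀ k, k ≤ n → S X k ω = Tb n b k := by
    intro b ω hω k hk
    exact Finset.sum_congr rfl fun i hi =>
      (mem_Eb.mp hω) i (lt_of_lt_of_le (Finset.mem_range.mp hi) hk)
  have hAeq : ∀ (hbdd : ∀ i ω, X i ω ≤ 1),
      {ω | hitPred U L (fun k => S X k ω) n} = ⋃ b ∈ D, Eb X n b := by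
    intro hbdd
    ext ω
    simp only [Set.mem_setOf_eq, Set.mem_iUnion, hD, Finset.mem_filter, Finset.mem_univ,
      true_and, exists_prop]
    constructor
    · intro h
      refine ⟨fun i => X i ω == 1, ?_, mem_Eb_bvec hbdd ω⟩
      exact hitPred_congr (fun k hk => hSk _ ω (mem_Eb_bvec hbdd ω) k hk) h
    · rintro ⟨b, hbD, hb⟩
      exact hitPred_congr (fun k hk => (hSk b ω hb k hk).symm) hbD
  have key : ∀ (μ : Measure Ω) (r : ℝ), IsBernoulliSeq μ r X → 0 ≤ r → r ≤ 1 →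
      μ {ω | hitPred U L (fun k => S X k ω) n}
        = ENNReal.ofReal (∑ b : Fin n → Bool, χ b * ∏ i, (if b i then r else 1 - r)) := by
    intro μ r hB hr0 hr1
    have hwnn : ∀ (b : Fin n → Bool) (i : Fin n), (0:ℝ) ≤ if b i then r else 1 - r := by
      intro b i; split <;> linarith
    rw [hAeq hB.bdd, measure_biUnion_finset (fun b _ b' _ h => Eb_disjoint h)
      (fun b _ => Eb_measurable hB.meas)]
    rw [Finset.sum_congr rfl (fun b _ => meas_Eb hB hr0 n b)]
    have h2 : ∀ b ∈ D, (∏ i : Fin n, ENNReal.ofReal (if b i then r else 1 - r))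
        = ENNReal.ofReal (∏ i : Fin n, (if b i then r else 1 - r)) :=
      fun b _ => (ENNReal.ofReal_prod_of_nonneg fun i _ => hwnn b i).symm
    rw [Finset.sum_congr rfl h2,
      ← ENNReal.ofReal_sum_of_nonneg fun b _ => Finset.prod_nonneg fun i _ => hwnn b i]
    congr 1
    rw [hD, Finset.sum_filter]
    refine Finset.sum_congr rfl fun b _ => ?_
    by_cases hbp : hitPred U L (Tb n b) n <;> simp [hχ, hbp]
  rw [key P p hBp hp (hpq.trans hq), key Q q hBq (hp.trans hpq) hq]
  refine ENNReal.ofReal_le_ofReal ?_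
  refine sum_w_mono hp hpq hq n χ
    (fun b => by by_cases hbp : hitPred U L (Tb n b) n <;> simp [hχ, hbp]) ?_
  intro b b' hbb'
  by_cases hbp : hitPred U L (Tb n b) n
  · have hT : ∀ k, Tb n b k ≤ Tb n b' k := by
      intro k
      refine Finset.sum_le_sum fun i _ => ?_
      simp only [vb]
      split
      · rename_i hlt
        have := hbb' ⟨i, hlt⟩
        cases hx : b ⟨i, hlt⟩ <;> cases hy : b' ⟨i, hlt⟩ <;>
          simp_all [Bool.le_iff_imp]
      · exact le_rfl
    have hbp' : hitPred U L (Tb n b') n := hitPred_mono_s hT hbp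
    simp [hχ, hbp, hbp']
  · by_cases hbp' : hitPred U L (Tb n b') n <;> simp [hχ, hbp, hbp']

end Statement4Aux


theorem statement_4 {Ω : Type*} [MeasurableSpace Ω]
    (α ε : ℝ) (hα : α ∈ Set.Ioo (0:ℝ) 1) (hε : ε ∈ Set.Ioo (0:ℝ) 1)
    (εs : ℕ → ℝ) (hεs0 : εs 0 = 0) (hmono : Monotone εs)
    (hnonneg : ∀ n, 0 ≤ εs n) (hlt : ∀ n, εs n < ε)
    (hlim : Filter.Tendsto εs Filter.atTop (nhds ε))
    (P : ℝ → Measure Ω) (X : ℕ → Ω → ℕ)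
    (hBern : ∀ p ∈ Set.Icc (0:ℝ) 1, IsBernoulliSeq (P p) p X)
    (p q : ℝ) (hp : 0 ≤ p) (hpq : p ≤ q) (hq : q ≤ 1) :
    P p {ω | hitsUpper (P α) X εs ω} ≤ P q {ω | hitsUpper (P α) X εs ω} := by
  have hset : {ω | hitsUpper (P α) X εs ω}
      = ⋃ n, {ω | hitPred (Ub (P α) X εs) (Lb (P α) X εs) (fun k => S X k ω) n} := by
    ext ω
    simp only [Set.mem_setOf_eq, Set.mem_iUnion]
    have htau : tau (P α) X εs ω
        = sInf (stopSet (Ub (P α) X εs) (Lb (P α) X εs) (fun k => S X k ω)) := rfl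
    rw [hitsUpper, htau]
    exact hitPred_iff
  rw [hset]
  have hmonA : Monotone
      (fun n => {ω | hitPred (Ub (P α) X εs) (Lb (P α) X εs) (fun k => S X k ω) n}) :=
    fun n m h ω hω => hitPred_mono_n h hω
  rw [Directed.measure_iUnion hmonA.directed_le, Directed.measure_iUnion hmonA.directed_le]
  exact iSup_mono fun n => meas_hitPred_le (hBern p ⟨hp, hpq.trans hq⟩)
    (hBern q ⟨hp.trans hpq, hq⟩) hp hpq hq _ _ n

end SeqMC
end

section
/- For all 0 ≤ p ≤ q ≤ 1, the probability of ever hitting the lower boundary is antitone in the success probability: P_p(τ < ∞, S_τ ≤ L_τ) ≥ P_q(τ < ∞, S_τ ≤ L_τ). -/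
open MeasureTheory ProbabilityTheory Filter Asymptotics
open scoped ENNReal

namespace SeqMC

variable {Ω : Type*} [MeasurableSpace Ω]

section Aux

/-- Bernoulli measure on `ℕ`. -/
noncomputable def bernM (p : ℝ) : Measure ℕ :=
  ENNReal.ofReal p • Measure.dirac 1 + ENNReal.ofReal (1 - p) • Measure.dirac 0

lemma bernM_apply (p : ℝ) (s : Set ℕ) :
    bernM p s = ENNReal.ofReal p * Measure.dirac 1 s
      + ENNReal.ofReal (1 - p) * Measure.dirac 0 s := by
  simp [bernM]

lemma isProb_bernM {p : ℝ} (h0 : 0 ≤ p) (h1 : p ≤ 1) : IsProbabilityMeasure (bernM p) := by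
  constructor
  rw [bernM_apply, measure_univ, measure_univ, mul_one, mul_one,
    ← ENNReal.ofReal_add h0 (by linarith), show p + (1 - p) = 1 by ring, ENNReal.ofReal_one]

lemma measurableSet_nat (s : Set ℕ) : MeasurableSet s := (Set.to_countable s).measurableSet

lemma map_X_eq_bernM {P : Measure Ω} {p : ℝ} {X : ℕ → Ω → ℕ}
    (hB : IsBernoulliSeq P p X) (h0 : 0 ≤ p) (h1 : p ≤ 1) (i : ℕ) :
    Measure.map (X i) P = bernM p := by
  haveI := hB.isProb
  ext s hs
  rw [Measure.map_apply (hB.meas i) hs, bernM_apply,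
    Measure.dirac_apply' _ hs, Measure.dirac_apply' _ hs]
  have hval : ∀ ω, X i ω = 0 ∨ X i ω = 1 := fun ω =>
    Nat.le_one_iff_eq_zero_or_eq_one.mp (hB.bdd i ω)
  have h1m : P (X i ⁻¹' {1}) = ENNReal.ofReal p := hB.bern i
  by_cases h1s : (1 : ℕ) ∈ s <;> by_cases h0s : (0 : ℕ) ∈ s
  · have hpre : X i ⁻¹' s = Set.univ := by
      ext ω
      simp only [Set.mem_preimage, Set.mem_univ, iff_true]
      rcases hval ω with h | h <;> rw [h] <;> assumption
    rw [hpre, measure_univ, Set.indicator_of_mem h1s, Set.indicator_of_mem h0s,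
      Pi.one_apply, Pi.one_apply, mul_one, mul_one,
      ← ENNReal.ofReal_add h0 (by linarith), show p + (1 - p) = 1 by ring, ENNReal.ofReal_one]
  · have hpre : X i ⁻¹' s = X i ⁻¹' {1} := by
      ext ω
      simp only [Set.mem_preimage, Set.mem_singleton_iff]
      rcases hval ω with h | h <;> rw [h] <;> simp [h0s, h1s]
    rw [hpre, h1m, Set.indicator_of_mem h1s, Set.indicator_of_notMem h0s,
      Pi.one_apply, mul_one, mul_zero, add_zero]
  · have hpre : X i ⁻¹' s = (X i ⁻¹' {1})ᶜ := by
      ext ω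
      simp only [Set.mem_preimage, Set.mem_compl_iff, Set.mem_singleton_iff]
      rcases hval ω with h | h <;> rw [h] <;> simp [h0s, h1s]
    rw [hpre, measure_compl ((hB.meas i) (measurableSet_singleton 1)) (measure_ne_top _ _),
      h1m, measure_univ, Set.indicator_of_notMem h1s, Set.indicator_of_mem h0s,
      Pi.one_apply, mul_zero, zero_add, mul_one,
      show (1 : ℝ) - p = 1 - p from rfl, ENNReal.ofReal_sub 1 h0, ENNReal.ofReal_one]
  · have hpre : X i ⁻¹' s = ∅ := by
      ext ω
      simp only [Set.mem_preimage, Set.mem_empty_iff_false, iff_false]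
      rcases hval ω with h | h <;> rw [h] <;> assumption
    rw [hpre, measure_empty, Set.indicator_of_notMem h1s, Set.indicator_of_notMem h0s,
      mul_zero, mul_zero, add_zero]

lemma map_vec_eq_pi {P : Measure Ω} {p : ℝ} {X : ℕ → Ω → ℕ}
    (hB : IsBernoulliSeq P p X) (h0 : 0 ≤ p) (h1 : p ≤ 1) (n : ℕ) :
    Measure.map (fun ω (i : Fin n) => X (i : ℕ) ω) P
      = Measure.pi (fun _ : Fin n => bernM p) := by
  haveI := hB.isProb
  haveI := isProb_bernM h0 h1
  refine (Measure.pi_eq fun s hs => ?_).symm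
  have hT : Measurable (fun ω (i : Fin n) => X (i : ℕ) ω) :=
    measurable_pi_lambda _ fun i => hB.meas i
  rw [Measure.map_apply hT (MeasurableSet.univ_pi hs)]
  set s' : ℕ → Set ℕ := fun k => if h : k < n then s ⟨k, h⟩ else Set.univ with hs'
  have hpre : (fun ω (i : Fin n) => X (i : ℕ) ω) ⁻¹' Set.pi Set.univ s
      = ⋂ k ∈ Finset.range n, X k ⁻¹' s' k := by
    ext ω
    simp only [Set.mem_preimage, Set.mem_pi, Set.mem_univ, forall_true_left,
      Set.mem_iInter, Finset.mem_range]
    constructor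
    · intro h k hk
      simpa [hs', dif_pos hk] using h ⟨k, hk⟩
    · intro h i
      simpa [hs', dif_pos i.isLt] using h i i.isLt
  rw [hpre, hB.indep.measure_inter_preimage_eq_mul (Finset.range n)
    (fun k _ => measurableSet_nat (s' k))]
  have hfac : ∀ k, P (X k ⁻¹' s' k) = bernM p (s' k) := fun k => by
    rw [← map_X_eq_bernM hB h0 h1 k, Measure.map_apply (hB.meas k) (measurableSet_nat _)]
  calc (∏ k ∈ Finset.range n, P (X k ⁻¹' s' k))
      = ∏ k ∈ Finset.range n, bernM p (s' k) :=
        Finset.prod_congr rfl fun k _ => hfac k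
    _ = ∏ i : Fin n, bernM p (s' (i : ℕ)) := (Fin.prod_univ_eq_prod_range _ n).symm
    _ = ∏ i : Fin n, bernM p (s i) := by
        refine Finset.prod_congr rfl fun i _ => ?_
        rw [hs']
        simp [dif_pos i.isLt]

/-- Uniform measure on `(0, 1]`. -/
noncomputable def unif : Measure ℝ := volume.restrict (Set.Ioc (0:ℝ) 1)

instance : IsProbabilityMeasure unif := by
  constructor
  rw [unif, Measure.restrict_apply_univ, Real.volume_Ioc]
  norm_num

noncomputable def gB (p : ℝ) (u : ℝ) : ℕ := if u ≤ p then 1 else 0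

lemma gB_measurable (p : ℝ) : Measurable (gB p) :=
  Measurable.ite measurableSet_Iic measurable_const measurable_const

lemma gB_mono {p q : ℝ} (h : p ≤ q) (u : ℝ) : gB p u ≤ gB q u := by
  unfold gB
  split_ifs with h1 h2
  · exact le_refl _
  · exact absurd (h1.trans h) h2
  · exact Nat.zero_le _
  · exact le_refl _

lemma map_gB {p : ℝ} (h0 : 0 ≤ p) (h1 : p ≤ 1) : Measure.map (gB p) unif = bernM p := by
  ext s hs
  rw [Measure.map_apply (gB_measurable p) hs, bernM_apply,
    Measure.dirac_apply' _ hs, Measure.dirac_apply' _ hs]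
  by_cases h1s : (1 : ℕ) ∈ s <;> by_cases h0s : (0 : ℕ) ∈ s
  · have hpre : gB p ⁻¹' s = Set.univ := by
      ext u
      simp only [Set.mem_preimage, Set.mem_univ, iff_true, gB]
      split_ifs <;> assumption
    rw [hpre, measure_univ, Set.indicator_of_mem h1s, Set.indicator_of_mem h0s,
      Pi.one_apply, Pi.one_apply, mul_one, mul_one,
      ← ENNReal.ofReal_add h0 (by linarith), show p + (1 - p) = 1 by ring, ENNReal.ofReal_one]
  · have hpre : gB p ⁻¹' s = Set.Iic p := by
      ext u
      simp only [Set.mem_preimage, Set.mem_Iic, gB]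
      split_ifs with h <;> simp [h, h0s, h1s]
    have hint : Set.Iic p ∩ Set.Ioc 0 1 = Set.Ioc 0 p := by
      ext u
      simp only [Set.mem_inter_iff, Set.mem_Iic, Set.mem_Ioc]
      constructor
      · rintro ⟨ha, hb, _⟩; exact ⟨hb, ha⟩
      · rintro ⟨hb, ha⟩; exact ⟨ha, hb, ha.trans h1⟩
    rw [hpre, unif, Measure.restrict_apply measurableSet_Iic, hint, Real.volume_Ioc,
      Set.indicator_of_mem h1s, Set.indicator_of_notMem h0s, Pi.one_apply,
      mul_one, mul_zero, add_zero, sub_zero]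
  · have hpre : gB p ⁻¹' s = Set.Ioi p := by
      ext u
      by_cases h : u ≤ p
      · simp [gB, h, h1s, not_lt.mpr h]
      · simp [gB, h, h0s, not_le.mp h]
    have hint : Set.Ioi p ∩ Set.Ioc 0 1 = Set.Ioc p 1 := by
      ext u
      simp only [Set.mem_inter_iff, Set.mem_Ioi, Set.mem_Ioc]
      constructor
      · rintro ⟨ha, _, hc⟩; exact ⟨ha, hc⟩
      · rintro ⟨ha, hc⟩; exact ⟨ha, lt_of_le_of_lt h0 ha, hc⟩
    rw [hpre, unif, Measure.restrict_apply measurableSet_Ioi, hint, Real.volume_Ioc,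
      Set.indicator_of_notMem h1s, Set.indicator_of_mem h0s, Pi.one_apply,
      mul_zero, mul_one, zero_add]
  · have hpre : gB p ⁻¹' s = ∅ := by
      ext u
      simp only [Set.mem_preimage, Set.mem_empty_iff_false, iff_false, gB]
      split_ifs <;> assumption
    rw [hpre, measure_empty, Set.indicator_of_notMem h1s, Set.indicator_of_notMem h0s,
      mul_zero, mul_zero, add_zero]

lemma map_gvec {p : ℝ} (h0 : 0 ≤ p) (h1 : p ≤ 1) (n : ℕ) :
    Measure.map (fun (u : Fin n → ℝ) i => gB p (u i)) (Measure.pi fun _ : Fin n => unif)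
      = Measure.pi fun _ : Fin n => bernM p := by
  haveI := isProb_bernM h0 h1
  refine (Measure.pi_eq fun s hs => ?_).symm
  have hG : Measurable (fun (u : Fin n → ℝ) i => gB p (u i)) :=
    measurable_pi_lambda _ fun i => (gB_measurable p).comp (measurable_pi_apply i)
  rw [Measure.map_apply hG (MeasurableSet.univ_pi hs)]
  have hpre : (fun (u : Fin n → ℝ) i => gB p (u i)) ⁻¹' Set.pi Set.univ s
      = Set.pi Set.univ fun i => gB p ⁻¹' s i := by
    ext u
    simp [Set.mem_pi]
  rw [hpre, Measure.pi_pi]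
  refine Finset.prod_congr rfl fun i _ => ?_
  rw [← map_gB h0 h1, Measure.map_apply (gB_measurable p) (hs i)]

def Sv (n : ℕ) (x : Fin n → ℕ) (k : ℕ) : ℕ :=
  ∑ i ∈ Finset.range k, if h : i < n then x ⟨i, h⟩ else 0

def lowSet (U L : ℕ → ℤ) (n : ℕ) : Set (Fin n → ℕ) :=
  {x | ∃ k, 1 ≤ k ∧ k ≤ n ∧
    (∀ j, 1 ≤ j → j ≤ k - 1 → L j < (Sv n x j : ℤ) ∧ (Sv n x j : ℤ) < U j) ∧
    (Sv n x k : ℤ) ≤ L k}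

lemma lowSet_measurable (U L : ℕ → ℤ) (n : ℕ) : MeasurableSet (lowSet U L n) :=
  (Set.to_countable _).measurableSet

lemma Sv_eq (X : ℕ → Ω → ℕ) (ω : Ω) (n k : ℕ) (hk : k ≤ n) :
    Sv n (fun i : Fin n => X (i : ℕ) ω) k = S X k ω := by
  unfold Sv S
  refine Finset.sum_congr rfl fun i hi => ?_
  rw [dif_pos (lt_of_lt_of_le (Finset.mem_range.mp hi) hk)]

lemma hitLowerBy_iff (X : ℕ → Ω → ℕ) (U L : ℕ → ℤ) (n : ℕ) (ω : Ω) :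
    hitLowerBy X U L n ω ↔ (fun i : Fin n => X (i : ℕ) ω) ∈ lowSet U L n := by
  unfold hitLowerBy notStopped lowSet
  constructor
  · rintro ⟨k, hk1, hkn, hns, hkL⟩
    refine ⟨k, hk1, hkn, fun j hj1 hj2 => ?_, ?_⟩
    · rw [Sv_eq X ω n j (by omega)]; exact hns j hj1 hj2
    · rw [Sv_eq X ω n k hkn]; exact hkL
  · rintro ⟨k, hk1, hkn, hns, hkL⟩
    refine ⟨k, hk1, hkn, fun j hj1 hj2 => ?_, ?_⟩
    · have := hns j hj1 hj2
      rwa [Sv_eq X ω n j (by omega)] at this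
    · rwa [Sv_eq X ω n k hkn] at hkL

lemma Sv_mono {n : ℕ} {x y : Fin n → ℕ} (h : ∀ i, x i ≤ y i) (k : ℕ) :
    Sv n x k ≤ Sv n y k := by
  refine Finset.sum_le_sum fun i _ => ?_
  split_ifs with hi
  · exact h ⟨i, hi⟩
  · exact le_refl _

lemma lowSet_anti {U L : ℕ → ℤ} {n : ℕ} {x y : Fin n → ℕ}
    (hxy : ∀ i, x i ≤ y i) (hy : y ∈ lowSet U L n) : x ∈ lowSet U L n := by
  obtain ⟨k, hk1, hkn, hns, hkL⟩ := hy
  have hxk : (Sv n x k : ℤ) ≤ L k :=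
    le_trans (by exact_mod_cast Sv_mono hxy k) hkL
  have hTne : {m | 1 ≤ m ∧ m ≤ k ∧ (Sv n x m : ℤ) ≤ L m}.Nonempty := ⟨k, hk1, le_refl k, hxk⟩
  obtain ⟨hm1, hmk, hmL⟩ := Nat.sInf_mem hTne
  set m := sInf {m | 1 ≤ m ∧ m ≤ k ∧ (Sv n x m : ℤ) ≤ L m} with hm
  refine ⟨m, hm1, le_trans hmk hkn, fun j hj1 hj2 => ?_, hmL⟩
  have hjm : j < m := by omega
  have hjT : j ∉ {m | 1 ≤ m ∧ m ≤ k ∧ (Sv n x m : ℤ) ≤ L m} := fun hj =>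
    absurd (Nat.sInf_le hj) (by omega)
  constructor
  · by_contra h
    push_neg at h
    exact hjT ⟨hj1, by omega, h⟩
  · calc (Sv n x j : ℤ) ≤ (Sv n y j : ℤ) := by exact_mod_cast Sv_mono hxy j
      _ < U j := (hns j hj1 (by omega)).2

lemma measure_hitLowerBy_anti {Pp Pq : Measure Ω} {X : ℕ → Ω → ℕ}
    {p q : ℝ} (hp0 : 0 ≤ p) (hpq : p ≤ q) (hq1 : q ≤ 1)
    (hBp : IsBernoulliSeq Pp p X) (hBq : IsBernoulliSeq Pq q X)
    (U L : ℕ → ℤ) (n : ℕ) :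
    Pq {ω | hitLowerBy X U L n ω} ≤ Pp {ω | hitLowerBy X U L n ω} := by
  have hp1 : p ≤ 1 := hpq.trans hq1
  have hq0 : 0 ≤ q := hp0.trans hpq
  have hA := lowSet_measurable U L n
  have hT : Measurable (fun ω (i : Fin n) => X (i : ℕ) ω) :=
    measurable_pi_lambda _ fun i => hBp.meas i
  have key : ∀ (r : ℝ), 0 ≤ r → r ≤ 1 → ∀ (Pr : Measure Ω), IsBernoulliSeq Pr r X →
      Pr {ω | hitLowerBy X U L n ω}
        = (Measure.pi fun _ : Fin n => unif)
            ((fun (u : Fin n → ℝ) i => gB r (u i)) ⁻¹' lowSet U L n) := by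
    intro r hr0 hr1 Pr hBr
    have hset : {ω | hitLowerBy X U L n ω}
        = (fun ω (i : Fin n) => X (i : ℕ) ω) ⁻¹' lowSet U L n := by
      ext ω; exact hitLowerBy_iff X U L n ω
    have hG : Measurable (fun (u : Fin n → ℝ) i => gB r (u i)) :=
      measurable_pi_lambda _ fun i => (gB_measurable r).comp (measurable_pi_apply i)
    rw [hset, ← Measure.map_apply hT hA, map_vec_eq_pi hBr hr0 hr1 n,
      ← map_gvec hr0 hr1 n, Measure.map_apply hG hA]
  rw [key p hp0 hp1 Pp hBp, key q hq0 hq1 Pq hBq]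
  exact measure_mono fun u hu => lowSet_anti (fun i => gB_mono hpq (u i)) hu

end Aux

theorem statement_5 {Ω : Type*} [MeasurableSpace Ω]
    (α ε : ℝ) (hα : α ∈ Set.Ioo (0:ℝ) 1) (hε : ε ∈ Set.Ioo (0:ℝ) 1)
    (εs : ℕ → ℝ) (hεs0 : εs 0 = 0) (hmono : Monotone εs)
    (hnonneg : ∀ n, 0 ≤ εs n) (hlt : ∀ n, εs n < ε)
    (hlim : Filter.Tendsto εs Filter.atTop (nhds ε))
    (P : ℝ → Measure Ω) (X : ℕ → Ω → ℕ)
    (hBern : ∀ p ∈ Set.Icc (0:ℝ) 1, IsBernoulliSeq (P p) p X)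
    (p q : ℝ) (hp : 0 ≤ p) (hpq : p ≤ q) (hq : q ≤ 1) :
    P q {ω | hitsLower (P α) X εs ω} ≤ P p {ω | hitsLower (P α) X εs ω} := by
  have hBp : IsBernoulliSeq (P p) p X := hBern p ⟨hp, hpq.trans hq⟩
  have hBq : IsBernoulliSeq (P q) q X := hBern q ⟨hp.trans hpq, hq⟩
  set U : ℕ → ℤ := Ub (P α) X εs with hU
  set L : ℕ → ℤ := Lb (P α) X εs with hL
  have hUnion : {ω | hitsLower (P α) X εs ω} = ⋃ n, {ω | hitLowerBy X U L n ω} := by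
    ext ω
    simp only [Set.mem_setOf_eq, Set.mem_iUnion]
    constructor
    · rintro ⟨hne, hle⟩
      set t := tau (P α) X εs ω with ht
      have htau : t = sInf {k | 1 ≤ k ∧ ((S X k ω : ℤ) ≤ L k ∨ U k ≤ (S X k ω : ℤ))} := rfl
      have hMne : {k | 1 ≤ k ∧ ((S X k ω : ℤ) ≤ L k ∨ U k ≤ (S X k ω : ℤ))}.Nonempty := by
        by_contra h
        rw [Set.not_nonempty_iff_eq_empty] at h
        exact hne (by rw [htau, h, Nat.sInf_empty])
      have hmem := Nat.sInf_mem hMne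
      rw [← htau] at hmem
      refine ⟨t, t, hmem.1, le_refl t, fun j hj1 hj2 => ?_, hle⟩
      have hjM : j ∉ {k | 1 ≤ k ∧ ((S X k ω : ℤ) ≤ L k ∨ U k ≤ (S X k ω : ℤ))} := by
        intro hj
        have h2 := Nat.sInf_le hj
        rw [← htau] at h2
        have h1t : 1 ≤ t := hmem.1
        omega
      rw [Set.mem_setOf_eq] at hjM
      push_neg at hjM
      exact hjM hj1
    · rintro ⟨n, k, hk1, hkn, hns, hkL⟩
      have hkM : k ∈ {m | 1 ≤ m ∧ ((S X m ω : ℤ) ≤ L m ∨ U m ≤ (S X m ω : ℤ))} :=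
        ⟨hk1, Or.inl hkL⟩
      have hlb : ∀ m ∈ {m | 1 ≤ m ∧ ((S X m ω : ℤ) ≤ L m ∨ U m ≤ (S X m ω : ℤ))}, k ≤ m := by
        intro m hm
        by_contra h
        push_neg at h
        have h1m : 1 ≤ m := hm.1
        have hns' := hns m h1m (by omega)
        rcases hm.2 with h2 | h2 <;> omega
      have htauk : tau (P α) X εs ω = k :=
        le_antisymm (Nat.sInf_le hkM) (hlb _ (Nat.sInf_mem ⟨k, hkM⟩))
      constructor
      · rw [htauk]; omega
      · rw [htauk]; exact hkL
  have hmonoS : Monotone fun n => {ω | hitLowerBy X U L n ω} := by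
    intro a b hab ω hω
    obtain ⟨k, h1, h2, h3, h4⟩ := hω
    exact ⟨k, h1, h2.trans hab, h3, h4⟩
  rw [hUnion, hmonoS.directed_le.measure_iUnion, hmonoS.directed_le.measure_iUnion]
  exact iSup_mono fun n => measure_hitLowerBy_anti hp hpq hq hBp hBq U L n


end SeqMC
end

section
/- For every n ∈ ℕ and all 0 ≤ p ≤ q ≤ 1, the probability of hitting the upper boundary within the first n steps is monotone in the success probability: P_p(τ ≤ n, S_τ ≥ U_τ) ≤ P_q(τ ≤ n, S_τ ≥ U_τ). (This follows from the coupling S_{p,k} = Σ_{i≤k} 1{V_i ≤ p} with V_1, V_2, … i.i.d. uniform on [0,1]: if the coupled path at level p hits the upper boundary by time n, then so does the coupled path at level q, at a time no later and without first hitting a lower boundary.) -/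
open MeasureTheory ProbabilityTheory Filter Asymptotics
open scoped ENNReal

namespace SeqMC

variable {Ω : Type*} [MeasurableSpace Ω]

/-! ### Auxiliary lemmas for `statement_6` -/

omit [MeasurableSpace Ω] in
lemma hitUpperBy_mono' {Ω' : Type*} {X : ℕ → Ω → ℕ} {X' : ℕ → Ω' → ℕ} {U L : ℕ → ℤ} {n : ℕ}
    {ω : Ω} {ω' : Ω'} (h : ∀ i, X i ω ≤ X' i ω') :
    hitUpperBy X U L n ω → hitUpperBy X' U L n ω' := by
  rintro ⟨k, hk1, hkn, hns, hU⟩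
  have hS : ∀ m, S X m ω ≤ S X' m ω' := fun m =>
    Finset.sum_le_sum fun i _ => h i
  classical
  set T : Set ℕ := {m | 1 ≤ m ∧ m ≤ k ∧ U m ≤ (S X' m ω' : ℤ)} with hT
  have hkT : k ∈ T := ⟨hk1, le_rfl, le_trans hU (by exact_mod_cast hS k)⟩
  have hne : T.Nonempty := ⟨k, hkT⟩
  set k' := sInf T with hk'
  have hk'T : k' ∈ T := Nat.sInf_mem hne
  refine ⟨k', hk'T.1, le_trans hk'T.2.1 hkn, ?_, hk'T.2.2⟩
  intro m hm1 hm2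
  have hmk' : m < k' := by omega
  have hmT : m ∉ T := Nat.notMem_of_lt_sInf hmk'
  have hmk : m ≤ k - 1 := by
    have := hk'T.2.1; omega
  have hlow := (hns m hm1 hmk).1
  constructor
  · exact lt_of_lt_of_le hlow (by exact_mod_cast hS m)
  · by_contra hcon
    push_neg at hcon
    exact hmT ⟨hm1, by omega, hcon⟩

omit [MeasurableSpace Ω] in
lemma hitUpperBy_congr' {Ω' : Type*} {X : ℕ → Ω → ℕ} {X' : ℕ → Ω' → ℕ} {U L : ℕ → ℤ} {n : ℕ}
    {ω : Ω} {ω' : Ω'} (h : ∀ i, i < n → X i ω = X' i ω') :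
    hitUpperBy X U L n ω ↔ hitUpperBy X' U L n ω' := by
  have hS : ∀ m, m ≤ n → S X m ω = S X' m ω' := fun m hm =>
    Finset.sum_congr rfl fun i hi => h i (lt_of_lt_of_le (Finset.mem_range.mp hi) hm)
  constructor
  · rintro ⟨k, hk1, hkn, hns, hU⟩
    refine ⟨k, hk1, hkn, fun m hm1 hm2 => ?_, by rw [← hS k hkn]; exact hU⟩
    rw [← hS m (by omega)]; exact hns m hm1 hm2
  · rintro ⟨k, hk1, hkn, hns, hU⟩
    refine ⟨k, hk1, hkn, fun m hm1 hm2 => ?_, by rw [hS k hkn]; exact hU⟩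
    rw [hS m (by omega)]; exact hns m hm1 hm2

/-- Bernoulli weight of a bit. -/
noncomputable def wt (r : ℝ) (b : Bool) : ℝ := if b then r else 1 - r

lemma wt_nonneg {r : ℝ} (h0 : 0 ≤ r) (h1 : r ≤ 1) (b : Bool) : 0 ≤ wt r b := by
  cases b <;> simp [wt] <;> linarith

/-- Expectation of `F` under the product Bernoulli(r) measure on the boolean cube. -/
noncomputable def bsum {n : ℕ} (F : (Fin n → Bool) → ℝ) (r : ℝ) : ℝ :=
  ∑ v : Fin n → Bool, F v * ∏ i, wt r (v i)

lemma bsum_nonneg {n : ℕ} {F : (Fin n → Bool) → ℝ} {r : ℝ} (h0 : 0 ≤ r) (h1 : r ≤ 1)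
    (hF : ∀ v, 0 ≤ F v) : 0 ≤ bsum F r :=
  Finset.sum_nonneg fun v _ => mul_nonneg (hF v)
    (Finset.prod_nonneg fun i _ => wt_nonneg h0 h1 _)

lemma bsum_le_bsum {n : ℕ} {F G : (Fin n → Bool) → ℝ} {r : ℝ} (h0 : 0 ≤ r) (h1 : r ≤ 1)
    (hFG : ∀ v, F v ≤ G v) : bsum F r ≤ bsum G r :=
  Finset.sum_le_sum fun v _ => mul_le_mul_of_nonneg_right (hFG v)
    (Finset.prod_nonneg fun i _ => wt_nonneg h0 h1 _)

lemma bsum_succ {n : ℕ} (F : (Fin (n + 1) → Bool) → ℝ) (r : ℝ) :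
    bsum F r = (1 - r) * bsum (fun u => F (Fin.cons false u)) r
      + r * bsum (fun u => F (Fin.cons true u)) r := by
  unfold bsum
  rw [← Fintype.sum_equiv (Fin.consEquiv (fun _ : Fin (n + 1) => Bool))
    (fun x => F (Fin.cons x.1 x.2) * ∏ i, wt r ((Fin.cons x.1 x.2 : Fin (n+1) → Bool) i))
    (fun v => F v * ∏ i, wt r (v i)) (fun x => rfl)]
  rw [Fintype.sum_prod_type, Fintype.sum_bool]
  simp only [Fin.prod_univ_succ, Fin.cons_zero, Fin.cons_succ, Finset.mul_sum]
  rw [add_comm]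
  congr 1 <;> · apply Finset.sum_congr rfl; intro u _; simp [wt]; ring

lemma bsum_mono_r : ∀ {n : ℕ} (F : (Fin n → Bool) → ℝ), (∀ v, 0 ≤ F v) →
    (∀ v w : Fin n → Bool, (∀ i, v i = true → w i = true) → F v ≤ F w) →
    ∀ p q : ℝ, 0 ≤ p → p ≤ q → q ≤ 1 → bsum F p ≤ bsum F q := by
  intro n
  induction n with
  | zero =>
      intro F _ _ p q _ _ _
      apply le_of_eq
      unfold bsum
      apply Finset.sum_congr rfl
      intro v _
      simp
  | succ n ih =>
      intro F hF0 hFm p q hp hpq hq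
      rw [bsum_succ, bsum_succ]
      set F0 : (Fin n → Bool) → ℝ := fun u => F (Fin.cons false u)
      set F1 : (Fin n → Bool) → ℝ := fun u => F (Fin.cons true u)
      have hmono : ∀ (b : Bool) (u w : Fin n → Bool), (∀ i, u i = true → w i = true) →
          F (Fin.cons b u) ≤ F (Fin.cons b w) := by
        intro b u w huw
        apply hFm
        intro i
        refine Fin.cases ?_ ?_ i <;> simp [huw]
        intro j; exact huw j
      have hA : bsum F0 p ≤ bsum F0 q := ih F0 (fun u => hF0 _) (hmono false) p q hp hpq hq
      have hB : bsum F1 p ≤ bsum F1 q := ih F1 (fun u => hF0 _) (hmono true) p q hp hpq hq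
      have hAB : bsum F0 q ≤ bsum F1 q := by
        apply bsum_le_bsum (le_trans hp hpq) hq
        intro u
        apply hFm
        intro i
        refine Fin.cases ?_ ?_ i <;> simp
      have hA0 : 0 ≤ bsum F0 p := bsum_nonneg hp (le_trans hpq hq) fun u => hF0 _
      have hB0 : 0 ≤ bsum F1 p := bsum_nonneg hp (le_trans hpq hq) fun u => hF0 _
      nlinarith

/-- Extension of a finite bit vector by `false`. -/
def extb (n : ℕ) (v : Fin n → Bool) : ℕ → Bool := fun i => if h : i < n then v ⟨i, h⟩ else false

/-- Deterministic path from a bit sequence. -/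
def Yb (g : ℕ → Bool) : ℕ → Unit → ℕ := fun i _ => if g i then 1 else 0

/-- Deterministic hitting predicate. -/
def Gb (U L : ℕ → ℤ) (n : ℕ) (v : Fin n → Bool) : Prop := hitUpperBy (Yb (extb n v)) U L n ()

open Classical in
/-- Real indicator of `Gb`. -/
noncomputable def Gind (U L : ℕ → ℤ) (n : ℕ) (v : Fin n → Bool) : ℝ :=
  if Gb U L n v then 1 else 0

lemma Gb_mono {U L : ℕ → ℤ} {n : ℕ} {v w : Fin n → Bool}
    (h : ∀ i, v i = true → w i = true) : Gb U L n v → Gb U L n w := by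
  apply hitUpperBy_mono'
  intro i
  simp only [Yb, extb]
  by_cases hi : i < n
  · simp only [dif_pos hi]
    cases hv : v ⟨i, hi⟩
    · simp
    · simp [h _ hv]
  · simp [dif_neg hi]

lemma bernoulli_prob_eq {P : Measure Ω} {r : ℝ} {X : ℕ → Ω → ℕ}
    (hB : IsBernoulliSeq P r X) (h0 : 0 ≤ r) (h1 : r ≤ 1) (U L : ℕ → ℤ) (n : ℕ) :
    P {ω | hitUpperBy X U L n ω} =
      ENNReal.ofReal (bsum (Gind U L n) r) := by
  classical
  haveI := hB.isProb
  have hX01 : ∀ i ω, X i ω = 0 ∨ X i ω = 1 := fun i ω => by have := hB.bdd i ω; omega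
  set T : (Fin n → Bool) → Set Ω :=
    fun v => ⋂ i ∈ Finset.range n, X i ⁻¹' {if extb n v i then 1 else 0} with hT
  have hmemT : ∀ v ω, ω ∈ T v ↔ ∀ i, i < n → X i ω = (if extb n v i then 1 else 0) := by
    intro v ω
    simp [hT, Set.mem_iInter]
  have hset : {ω | hitUpperBy X U L n ω} =
      ⋃ v ∈ Finset.univ.filter (fun v : Fin n → Bool => Gb U L n v), T v := by
    ext ω
    simp only [Set.mem_setOf_eq, Set.mem_iUnion, Finset.mem_filter, Finset.mem_univ, true_and]
    constructor
    · intro h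
      refine ⟨fun i => decide (X i.val ω = 1), ?_, ?_⟩
      · refine (hitUpperBy_congr' (X := X) (ω := ω) ?_).mp h
        intro i hi
        rcases hX01 i ω with hX | hX <;> simp [Yb, extb, hi, hX]
      · rw [hmemT]
        intro i hi
        rcases hX01 i ω with hX | hX <;> simp [extb, hi, hX]
    · rintro ⟨v, hGv, hωv⟩
      rw [hmemT] at hωv
      refine (hitUpperBy_congr' (X' := Yb (extb n v)) (ω' := ()) ?_).mpr hGv
      intro i hi
      rw [hωv i hi]; rfl
  rw [hset]
  have hmeas : ∀ v, MeasurableSet (T v) := by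
    intro v
    apply MeasurableSet.biInter (Finset.range n).countable_toSet
    intro i _
    exact hB.meas i (measurableSet_singleton _)
  have hdisj : Set.PairwiseDisjoint
      (↑(Finset.univ.filter (fun v : Fin n → Bool => Gb U L n v))) T := by
    intro v _ w _ hvw
    have : ∃ i : Fin n, v i ≠ w i := by
      by_contra hc
      push_neg at hc
      exact hvw (funext hc)
    obtain ⟨i, hi⟩ := this
    rw [Function.onFun]
    rw [Set.disjoint_left]
    intro ω hv hw
    rw [hmemT] at hv hw
    have e1 := hv i.val i.isLt
    have e2 := hw i.val i.isLt
    have hev : extb n v i.val = v i := by simp [extb, i.isLt]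
    have hew : extb n w i.val = w i := by simp [extb, i.isLt]
    rw [hev] at e1; rw [hew] at e2
    cases hvi : v i <;> cases hwi : w i <;> simp_all
  rw [measure_biUnion_finset hdisj fun v _ => hmeas v]
  have hatom : ∀ v : Fin n → Bool, P (T v) = ENNReal.ofReal (∏ i : Fin n, wt r (v i)) := by
    intro v
    rw [hT]
    rw [hB.indep.meas_biInter (fun i _ => ⟨{if extb n v i then 1 else 0},
      measurableSet_singleton _, rfl⟩)]
    have hfac : ∀ i, i < n →
        P (X i ⁻¹' {if extb n v i then 1 else 0}) = ENNReal.ofReal (wt r (extb n v i)) := by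
      intro i _
      cases hb : extb n v i
      · have hpre : X i ⁻¹' {(0:ℕ)} = (X i ⁻¹' {1})ᶜ := by
          ext ω
          rcases hX01 i ω with hX | hX <;> simp [hX]
        simp only [Bool.false_eq_true, if_false, hpre, wt]
        rw [prob_compl_eq_one_sub (hB.meas i (measurableSet_singleton _)), hB.bern i]
        rw [ENNReal.ofReal_sub 1 h0, ENNReal.ofReal_one]
      · simp [wt, hB.bern i]
    rw [Finset.prod_congr rfl fun i hi => hfac i (Finset.mem_range.mp hi)]
    rw [← ENNReal.ofReal_prod_of_nonneg fun i _ => by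
      cases extb n v i <;> simp [wt] <;> linarith]
    congr 1
    rw [← Fin.prod_univ_eq_prod_range (fun i => wt r (extb n v i)) n]
    apply Finset.prod_congr rfl
    intro i _
    congr 1
    simp [extb, i.isLt]
  rw [Finset.sum_congr rfl fun v _ => hatom v]
  rw [← ENNReal.ofReal_sum_of_nonneg fun v _ => Finset.prod_nonneg fun i _ => by
    cases v i <;> simp [wt] <;> linarith]
  congr 1
  rw [bsum, Finset.sum_filter]
  apply Finset.sum_congr rfl
  intro v _
  by_cases hG : Gb U L n v <;> simp [Gind, hG]

theorem statement_6 {Ω : Type*} [MeasurableSpace Ω]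
    (α ε : ℝ) (hα : α ∈ Set.Ioo (0:ℝ) 1) (hε : ε ∈ Set.Ioo (0:ℝ) 1)
    (εs : ℕ → ℝ) (hεs0 : εs 0 = 0) (hmono : Monotone εs)
    (hnonneg : ∀ n, 0 ≤ εs n) (hlt : ∀ n, εs n < ε)
    (hlim : Filter.Tendsto εs Filter.atTop (nhds ε))
    (P : ℝ → Measure Ω) (X : ℕ → Ω → ℕ)
    (hBern : ∀ p ∈ Set.Icc (0:ℝ) 1, IsBernoulliSeq (P p) p X)
    (p q : ℝ) (hp : 0 ≤ p) (hpq : p ≤ q) (hq : q ≤ 1) :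
    ∀ n : ℕ, 1 ≤ n →
      P p {ω | hitUpperBy X (Ub (P α) X εs) (Lb (P α) X εs) n ω} ≤
        P q {ω | hitUpperBy X (Ub (P α) X εs) (Lb (P α) X εs) n ω} := by
  intro n _
  have hp1 : p ≤ 1 := le_trans hpq hq
  have hq0 : 0 ≤ q := le_trans hp hpq
  have hBp := hBern p ⟨hp, hp1⟩
  have hBq := hBern q ⟨hq0, hq⟩
  rw [bernoulli_prob_eq hBp hp hp1 _ _ n, bernoulli_prob_eq hBq hq0 hq _ _ n]
  apply ENNReal.ofReal_le_ofReal
  apply bsum_mono_r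
  · intro v
    unfold Gind
    split <;> norm_num
  · intro v w hvw
    unfold Gind
    by_cases hv : Gb (Ub (P α) X εs) (Lb (P α) X εs) n v
    · rw [if_pos hv, if_pos (Gb_mono hvw hv)]
    · rw [if_neg hv]
      split <;> norm_num
  · exact hp
  · exact hpq
  · exact hq


end SeqMC
end
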